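/- arXiv:2308.16837 — 13 statements merged into one kernel-verified Lean document; each statement's English description precedes it below -/
import Mathlib

section
/- For any tree T, the 2-limited packing partition number equals ⌈(Δ(T)+1)/2⌉, where Δ(T) is the maximum degree of T. -/
open SimpleGraph

/-- The closed neighborhood `N[v]` of a vertex. -/
def closedNbhd {V : Type*} (G : SimpleGraph V) (v : V) : Set V :=
  insert v (G.neighborSet v)

/-- `B` is a `k`-limited packing: every closed neighborhood contains at most `k` vertices of `B`. -/
def IsLimitedPacking {V : Type*} (G : SimpleGraph V) (k : ℕ) (B : Set V) : Prop :=
  ∀ v : V, (B ∩ closedNbhd G v).ncard ≤ k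

/-- `P` is a partition of the vertex set of `G` into `k`-limited packing sets. -/
def IsLPPartition {V : Type*} (G : SimpleGraph V) (k : ℕ) (P : Finset (Set V)) : Prop :=
  (∀ B ∈ P, IsLimitedPacking G k B) ∧ (∀ v : V, ∃! B : Set V, B ∈ P ∧ v ∈ B)

/-- The `k`-limited packing partition number `χ_{×k}(G)`: minimum number of parts in a
partition of the vertex set into `k`-limited packing sets. -/
noncomputable def chiLP {V : Type*} (G : SimpleGraph V) (k : ℕ) : ℕ :=
  sInf {n | ∃ P : Finset (Set V), IsLPPartition G k P ∧ P.card = n}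


/-- In an acyclic graph, a neighbor of `u` lying on a path starting at `u`
must be the second vertex of that path. -/
lemma aux_eq_snd {V : Type*} [DecidableEq V] {T : SimpleGraph V} (hT : T.IsAcyclic)
    {u v w : V} (p : T.Walk u v) (hp : p.IsPath) (hw : w ∈ p.support)
    (h : T.Adj u w) : p.getVert 1 = w := by
  have hq : (⟨p.takeUntil w hw, hp.takeUntil hw⟩ : T.Path u w) = Path.singleton h :=
    hT.path_unique _ _
  have hq' : p.takeUntil w hw = Walk.cons h Walk.nil := congrArg Subtype.val hq
  have hspec := p.take_spec hw
  rw [hq'] at hspec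
  rw [← hspec]
  simp [Walk.cons_append, Walk.nil_append]

/-- In a finite acyclic graph, every nonempty vertex subset contains a vertex with at
most one neighbor inside the subset. -/
lemma aux_exists_leaf {V : Type*} [Fintype V] [DecidableEq V] {T : SimpleGraph V}
    [DecidableRel T.Adj] (hT : T.IsAcyclic) {s : Finset V} (hs : s.Nonempty) :
    ∃ u ∈ s, (s.filter (fun w => T.Adj u w)).card ≤ 1 := by
  classical
  set P : Set ℕ := {n | ∃ (a b : V) (p : T.Walk a b), p.IsPath ∧
      (∀ x ∈ p.support, x ∈ s) ∧ p.length = n} with hP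
  obtain ⟨a, ha⟩ := hs
  have hne : P.Nonempty := ⟨0, a, a, Walk.nil, by simp [Walk.IsPath.nil], by simpa using ha, rfl⟩
  have hbdd : BddAbove P := by
    refine ⟨Fintype.card V, fun n hn => ?_⟩
    obtain ⟨x, y, p, hp, _, rfl⟩ := hn
    exact le_of_lt hp.length_lt
  obtain ⟨u, v, p, hp, hsupp, hlen⟩ := Nat.sSup_mem hne hbdd
  refine ⟨u, hsupp u p.start_mem_support, ?_⟩
  by_contra hcard
  push_neg at hcard
  obtain ⟨w₁, hw₁, w₂, hw₂, hne12⟩ := Finset.one_lt_card.mp hcard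
  simp only [Finset.mem_filter] at hw₁ hw₂
  -- every neighbor of u inside s lies on p
  have hmem : ∀ w ∈ s, T.Adj u w → w ∈ p.support := by
    intro w hws hadj
    by_contra hns
    have hp' : (Walk.cons hadj.symm p).IsPath := hp.cons hns
    have hmemP : (Walk.cons hadj.symm p).length ∈ P :=
      ⟨w, v, _, hp', by
        intro x hx
        rcases (Walk.support_cons _ _).symm ▸ hx with hx
        rcases List.mem_cons.mp hx with rfl | hx
        · exact hws
        · exact hsupp x hx, rfl⟩
    have := le_csSup hbdd hmemP
    simp only [Walk.length_cons, hlen] at this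
    omega
  have e1 := aux_eq_snd hT p hp (hmem w₁ hw₁.1 hw₁.2) hw₁.2
  have e2 := aux_eq_snd hT p hp (hmem w₂ hw₂.1 hw₂.2) hw₂.2
  exact hne12 (e1 ▸ e2 ▸ rfl)

lemma mem_closedNbhd {V : Type*} {G : SimpleGraph V} {v x : V} :
    x ∈ closedNbhd G v ↔ x = v ∨ G.Adj v x := by
  simp [closedNbhd, SimpleGraph.mem_neighborSet]

open scoped Classical in
lemma aux_coloring {V : Type*} [Fintype V] [DecidableEq V] {T : SimpleGraph V}
    [DecidableRel T.Adj] (hT : T.IsAcyclic) {k : ℕ} (hk : 1 ≤ k)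
    (hdeg : ∀ v, T.degree v + 1 ≤ 2 * k) (s : Finset V) :
    ∃ c : V → Fin k, ∀ v ∈ s, ∀ i : Fin k,
      (s.filter (fun x => x ∈ closedNbhd T v ∧ c x = i)).card ≤ 2 := by
  induction s using Finset.strongInductionOn with
  | _ s IH =>
  rcases s.eq_empty_or_nonempty with rfl | hs
  · exact ⟨fun _ => ⟨0, hk⟩, by simp⟩
  obtain ⟨u, hu, hdeg1⟩ := aux_exists_leaf hT hs
  set s' := s.erase u with hs'
  obtain ⟨c', hc'⟩ := IH s' (Finset.erase_ssubset hu)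
  set nbrs := s.filter (fun w => T.Adj u w) with hnbrs
  -- choose a color for u
  have hchoice : ∃ i₀ : Fin k, ∀ v ∈ s, T.Adj u v →
      (s'.filter (fun x => x ∈ closedNbhd T v ∧ c' x = i₀)).card ≤ 1 := by
    rcases nbrs.eq_empty_or_nonempty with hne | ⟨v₀, hv₀⟩
    · refine ⟨⟨0, hk⟩, fun v hv hadj => ?_⟩
      have : v ∈ nbrs := Finset.mem_filter.mpr ⟨hv, hadj⟩
      rw [hne] at this
      simp at this
    · have huniq : ∀ v ∈ s, T.Adj u v → v = v₀ := fun v hv hadj =>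
        Finset.card_le_one.mp hdeg1 v (Finset.mem_filter.mpr ⟨hv, hadj⟩) v₀ hv₀
      have hv₀s := (Finset.mem_filter.mp hv₀).1
      have hadj₀ : T.Adj u v₀ := (Finset.mem_filter.mp hv₀).2
      -- pigeonhole
      have hsum : ∑ i : Fin k, (s'.filter (fun x => x ∈ closedNbhd T v₀ ∧ c' x = i)).card
          = (s'.filter (fun x => x ∈ closedNbhd T v₀)).card := by
        rw [Finset.card_eq_sum_card_fiberwise
          (f := c') (t := Finset.univ) (fun x _ => Finset.mem_univ _)]
        congr 1
        ext i
        rw [Finset.filter_filter]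
      have hsub : s'.filter (fun x => x ∈ closedNbhd T v₀) ⊆
          (insert v₀ (T.neighborFinset v₀)).erase u := by
        intro x hx
        obtain ⟨hxs, hxN⟩ := Finset.mem_filter.mp hx
        refine Finset.mem_erase.mpr ⟨(Finset.mem_erase.mp hxs).1, ?_⟩
        rcases mem_closedNbhd.mp hxN with rfl | hxadj
        · exact Finset.mem_insert_self _ _
        · exact Finset.mem_insert_of_mem (by simpa using hxadj)
      have hcard : ((insert v₀ (T.neighborFinset v₀)).erase u).card = T.degree v₀ := by
        rw [Finset.card_erase_of_mem
          (Finset.mem_insert_of_mem (by simpa using hadj₀.symm)),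
          Finset.card_insert_of_notMem (by simp), T.card_neighborFinset_eq_degree]
        omega
      have hpig : ∃ i₀ : Fin k,
          (s'.filter (fun x => x ∈ closedNbhd T v₀ ∧ c' x = i₀)).card ≤ 1 := by
        by_contra hcon
        push_neg at hcon
        have h2k : 2 * k ≤ ∑ i : Fin k, (s'.filter
            (fun x => x ∈ closedNbhd T v₀ ∧ c' x = i)).card := by
          calc 2 * k = ∑ _i : Fin k, 2 := by simp [mul_comm]
          _ ≤ _ := Finset.sum_le_sum (fun i _ => (hcon i))
        rw [hsum] at h2k
        have h1 : (s'.filter (fun x => x ∈ closedNbhd T v₀)).card ≤ T.degree v₀ :=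
          le_of_le_of_eq (Finset.card_le_card hsub) hcard
        have := hdeg v₀
        omega
      obtain ⟨i₀, hi₀⟩ := hpig
      exact ⟨i₀, fun v hv hadj => (huniq v hv hadj) ▸ hi₀⟩
  obtain ⟨i₀, hsel⟩ := hchoice
  set c : V → Fin k := Function.update c' u i₀ with hc
  have hcu : c u = i₀ := Function.update_self _ _ _
  have hfix : ∀ (v : V) (i : Fin k), s'.filter (fun x => x ∈ closedNbhd T v ∧ c x = i)
      = s'.filter (fun x => x ∈ closedNbhd T v ∧ c' x = i) := by
    intro v i
    apply Finset.filter_congr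
    intro x hx
    rw [hc, Function.update_of_ne (Finset.mem_erase.mp hx).1]
  refine ⟨c, fun v hv i => ?_⟩
  by_cases hvu : v = u
  · subst hvu
    have hsub : s.filter (fun x => x ∈ closedNbhd T v ∧ c x = i) ⊆ insert v nbrs := by
      intro x hx
      obtain ⟨hxs, hxN, _⟩ := Finset.mem_filter.mp hx
      rcases mem_closedNbhd.mp hxN with rfl | hxadj
      · exact Finset.mem_insert_self _ _
      · exact Finset.mem_insert_of_mem (Finset.mem_filter.mpr ⟨hxs, hxadj⟩)
    calc (s.filter (fun x => x ∈ closedNbhd T v ∧ c x = i)).card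
        ≤ (insert v nbrs).card := Finset.card_le_card hsub
      _ ≤ nbrs.card + 1 := Finset.card_insert_le _ _
      _ ≤ 2 := by omega
  · have hvs' : v ∈ s' := Finset.mem_erase.mpr ⟨hvu, hv⟩
    have hsplit : s = insert u s' := (Finset.insert_erase hu).symm
    rw [hsplit, Finset.filter_insert]
    by_cases hcase : u ∈ closedNbhd T v ∧ c u = i
    · rw [if_pos hcase]
      have hadj : T.Adj u v := by
        rcases mem_closedNbhd.mp hcase.1 with h | h
        · exact absurd h.symm hvu
        · exact h.symm
      have hi : i = i₀ := hcase.2 ▸ hcu ▸ rfl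
      calc (insert u (s'.filter (fun x => x ∈ closedNbhd T v ∧ c x = i))).card
          ≤ (s'.filter (fun x => x ∈ closedNbhd T v ∧ c x = i)).card + 1 :=
            Finset.card_insert_le _ _
        _ ≤ 1 + 1 := by
            rw [hfix, hi]
            exact Nat.add_le_add_right (hsel v hv hadj) 1
        _ = 2 := rfl
    · rw [if_neg hcase, hfix]
      exact hc' v hvs' i

/-- For any tree `T`, `χ_{×2}(T) = ⌈(Δ(T)+1)/2⌉`. -/
theorem chiLP_two_of_tree {V : Type*} [Fintype V]
    (T : SimpleGraph V) [DecidableRel T.Adj] (hT : T.IsTree) :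
    (chiLP T 2 : ℤ) = ⌈((T.maxDegree : ℚ) + 1) / 2⌉ := by
  classical
  set Δ := T.maxDegree with hΔ
  set k := Δ / 2 + 1 with hkdef
  have hknz : 1 ≤ k := by omega
  have hdeg : ∀ v, T.degree v + 1 ≤ 2 * k := fun v => by
    have := T.degree_le_maxDegree v; omega
  obtain ⟨c, hc⟩ := aux_coloring hT.IsAcyclic hknz hdeg Finset.univ
  set P : Finset (Set V) := Finset.univ.image (fun i : Fin k => {x | c x = i}) with hPdef
  have hPpart : IsLPPartition T 2 P := by
    constructor
    · intro B hB
      obtain ⟨i, -, rfl⟩ := Finset.mem_image.mp hB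
      intro v
      have hEq : {x | c x = i} ∩ closedNbhd T v
          = ↑(Finset.univ.filter (fun x => x ∈ closedNbhd T v ∧ c x = i)) := by
        ext x; simp [and_comm]
      rw [hEq, Set.ncard_coe_finset]
      exact hc v (Finset.mem_univ v) i
    · intro v
      refine ⟨{x | c x = c v}, ⟨Finset.mem_image.mpr ⟨c v, Finset.mem_univ _, rfl⟩, rfl⟩, ?_⟩
      rintro B ⟨hB, hvB⟩
      obtain ⟨i, -, rfl⟩ := Finset.mem_image.mp hB
      have hci : c v = i := hvB
      rw [← hci]
  have hPcard : P.card ≤ k := le_trans Finset.card_image_le (by simp)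
  -- lower bound
  have hlow : ∀ n ∈ {n | ∃ P : Finset (Set V), IsLPPartition T 2 P ∧ P.card = n}, k ≤ n := by
    rintro n ⟨Q, hQ, rfl⟩
    have : Nonempty V := hT.isConnected.nonempty
    obtain ⟨v, hv⟩ := T.exists_maximal_degree_vertex
    choose f hf using fun x => (hQ.2 x).exists
    set N : Finset V := insert v (T.neighborFinset v) with hNdef
    have hNcard : N.card = Δ + 1 := by
      rw [hNdef, Finset.card_insert_of_notMem (by simp), T.card_neighborFinset_eq_degree]
      omega
    have hsum := Finset.card_eq_sum_card_fiberwise (f := f) (s := N) (t := Q)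
      (fun x _ => (hf x).1)
    have hfib : ∀ B ∈ Q, (N.filter (fun x => f x = B)).card ≤ 2 := by
      intro B hB
      have hsub : ↑(N.filter (fun x => f x = B)) ⊆ B ∩ closedNbhd T v := by
        intro x hx
        simp only [Finset.coe_filter, Set.mem_setOf_eq] at hx
        obtain ⟨hxN, hfx⟩ := hx
        refine ⟨hfx ▸ (hf x).2, ?_⟩
        rcases Finset.mem_insert.mp hxN with rfl | hxadj
        · exact Set.mem_insert _ _
        · exact Set.mem_insert_of_mem _ (by simpa using hxadj)
      calc (N.filter (fun x => f x = B)).card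
          = (↑(N.filter (fun x => f x = B)) : Set V).ncard := (Set.ncard_coe_finset _).symm
        _ ≤ (B ∩ closedNbhd T v).ncard := Set.ncard_le_ncard hsub (Set.toFinite _)
        _ ≤ 2 := hQ.1 B hB v
    have hle : Δ + 1 ≤ 2 * Q.card := by
      rw [← hNcard, hsum]
      calc ∑ B ∈ Q, (N.filter (fun x => f x = B)).card ≤ ∑ _B ∈ Q, 2 :=
            Finset.sum_le_sum hfib
        _ = 2 * Q.card := by rw [Finset.sum_const, smul_eq_mul, mul_comm]
    omega
  have hmem : P.card ∈ {n | ∃ P : Finset (Set V), IsLPPartition T 2 P ∧ P.card = n} :=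
    ⟨P, hPpart, rfl⟩
  have hPk : P.card = k := le_antisymm hPcard (hlow _ hmem)
  have hchi : chiLP T 2 = k := by
    rw [chiLP]
    exact le_antisymm (Nat.sInf_le (hPk ▸ hmem)) (le_csInf ⟨_, hmem⟩ hlow)
  rw [hchi, eq_comm, Int.ceil_eq_iff]
  obtain ⟨m, hm⟩ | ⟨m, hm⟩ := Nat.even_or_odd Δ
  · have hk' : k = m + 1 := by omega
    have hΔq : (Δ : ℚ) = 2 * m := by rw [hm]; push_cast; ring
    rw [hk', hΔq]
    push_cast
    constructor <;> nlinarith [ (0:ℚ) ≤ (m:ℚ) ]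
  · have hk' : k = m + 1 := by omega
    have hΔq : (Δ : ℚ) = 2 * m + 1 := by rw [hm]; push_cast; ring
    rw [hk', hΔq]
    push_cast
    constructor <;> nlinarith [ (0:ℚ) ≤ (m:ℚ) ]
end

section
/- For any graph G of order n and size m, χ_{×2}(G) ≥ m/n + 1/2, i.e., χ_{×2}(G) ≥ (1 + 2m/n)/2. -/
open SimpleGraph

lemma ncard_biUnion_le' {V : Type*} [Fintype V] (P : Finset (Set V)) (f : Set V → Set V) :
    (⋃ B ∈ P, f B).ncard ≤ ∑ B ∈ P, (f B).ncard := by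
  classical
  induction P using Finset.induction with
  | empty => simp
  | insert a s h ih =>
    rw [Finset.set_biUnion_insert, Finset.sum_insert h]
    exact le_trans (Set.ncard_union_le _ _) (add_le_add_right ih _)


/-- For a graph `G` of order `n` and size `m`, `χ_{×2}(G) ≥ m/n + 1/2`. -/
theorem chiLP_two_ge {V : Type*} [Fintype V] [DecidableEq V] [Nonempty V]
    (G : SimpleGraph V) [DecidableRel G.Adj] :
    (G.edgeFinset.card : ℚ) / (Fintype.card V) + 1 / 2 ≤ chiLP G 2 := by
  classical
  set S := {n | ∃ P : Finset (Set V), IsLPPartition G 2 P ∧ P.card = n} with hS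
  have hne : S.Nonempty := by
    refine ⟨(Finset.univ.image (fun v : V => ({v} : Set V))).card,
      Finset.univ.image (fun v : V => ({v} : Set V)), ⟨?_, ?_⟩, rfl⟩
    · rintro B hB v
      simp only [Finset.mem_image] at hB
      obtain ⟨u, -, rfl⟩ := hB
      calc (({u} : Set V) ∩ closedNbhd G v).ncard ≤ ({u} : Set V).ncard :=
            Set.ncard_le_ncard Set.inter_subset_left (Set.toFinite _)
        _ ≤ 2 := by simp
    · intro v
      refine ⟨{v}, ⟨by simp, rfl⟩, ?_⟩
      rintro B ⟨hB, hvB⟩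
      simp only [Finset.mem_image] at hB
      obtain ⟨u, -, rfl⟩ := hB
      simp_all
  have hmem : chiLP G 2 ∈ S := Nat.sInf_mem hne
  obtain ⟨P, ⟨hLP, hpart⟩, hcard⟩ := hmem
  -- key: for each v, degree v + 1 ≤ 2 * P.card
  have hdeg : ∀ v : V, G.degree v + 1 ≤ 2 * P.card := by
    intro v
    have hsub : closedNbhd G v ⊆ ⋃ B ∈ P, (B ∩ closedNbhd G v) := by
      intro u hu
      obtain ⟨B, ⟨hBP, huB⟩, -⟩ := hpart u
      exact Set.mem_biUnion hBP ⟨huB, hu⟩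
    have h1 : (closedNbhd G v).ncard ≤ ∑ B ∈ P, (B ∩ closedNbhd G v).ncard :=
      le_trans (Set.ncard_le_ncard hsub (Set.toFinite _)) (ncard_biUnion_le' P _)
    have h2 : ∑ B ∈ P, (B ∩ closedNbhd G v).ncard ≤ ∑ _B ∈ P, 2 :=
      Finset.sum_le_sum fun B hB => hLP B hB v
    have h3 : (closedNbhd G v).ncard = G.degree v + 1 := by
      rw [closedNbhd, Set.ncard_insert_of_notMem (by simp) (Set.toFinite _),
        ← G.card_neighborFinset_eq_degree, Set.ncard_eq_toFinset_card',
        SimpleGraph.neighborFinset_def, Set.toFinset_congr rfl]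
    rw [h3] at h1
    simpa [mul_comm] using le_trans h1 (by simpa using h2)
  -- sum over all vertices
  have hsum : 2 * G.edgeFinset.card + Fintype.card V ≤ 2 * P.card * Fintype.card V := by
    have := G.sum_degrees_eq_twice_card_edges
    calc 2 * G.edgeFinset.card + Fintype.card V
        = ∑ v : V, (G.degree v + 1) := by
          rw [Finset.sum_add_distrib, this, Finset.sum_const, smul_eq_mul, mul_one,
            Finset.card_univ]
      _ ≤ ∑ _v : V, 2 * P.card := Finset.sum_le_sum fun v _ => hdeg v
      _ = 2 * P.card * Fintype.card V := by simp [mul_comm]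
  -- now convert to ℚ
  have hn : (0 : ℚ) < Fintype.card V := by
    exact_mod_cast Fintype.card_pos
  have hq : (2 * G.edgeFinset.card + Fintype.card V : ℚ) ≤ 2 * P.card * Fintype.card V := by
    exact_mod_cast hsum
  rw [← hcard]
  push_cast
  rw [div_add_div _ _ hn.ne' two_ne_zero, div_le_iff₀ (by positivity)]
  nlinarith [hq]
end

section
/- For any graph G of order n and size m, 2·L₂(G)·χ_{×2}(G)² − 2·L₂(G)·χ_{×2}(G) + n − 2m ≥ 0; equivalently χ_{×2}(G) ≥ (1 + √(1 + (4m−2n)/L₂(G)))/2. -/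
open SimpleGraph

/-- The `2`-limited packing number `L₂(G)`: maximum size of a `2`-limited packing. -/
noncomputable def L2 {V : Type*} (G : SimpleGraph V) : ℕ :=
  sSup {n | ∃ B : Set V, IsLimitedPacking G 2 B ∧ B.ncard = n}

/-- For a graph `G` of order `n` and size `m`,
`2·L₂(G)·χ_{×2}(G)² − 2·L₂(G)·χ_{×2}(G) + n − 2m ≥ 0`. -/
theorem L2_chiLP_quadratic {V : Type*} [Fintype V] [DecidableEq V] [Nonempty V]
    (G : SimpleGraph V) [DecidableRel G.Adj] :
    (0 : ℤ) ≤ 2 * L2 G * (chiLP G 2) ^ 2 - 2 * L2 G * chiLP G 2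
      + Fintype.card V - 2 * G.edgeFinset.card := by
  classical
  set n := Fintype.card V with hn
  set m := G.edgeFinset.card with hm
  set L := L2 G with hL
  set k := chiLP G 2 with hk
  -- the singleton partition shows the chiLP set is nonempty
  have hsingl : IsLPPartition G 2 (Finset.univ.image (fun v : V => ({v} : Set V))) := by
    constructor
    · intro B hB
      simp only [Finset.mem_image, Finset.mem_univ, true_and] at hB
      obtain ⟨v, rfl⟩ := hB
      intro w
      calc (({v} : Set V) ∩ closedNbhd G w).ncard ≤ ({v} : Set V).ncard :=
            Set.ncard_le_ncard Set.inter_subset_left (Set.finite_singleton v)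
        _ ≤ 2 := by simp
    · intro v
      refine ⟨{v}, ⟨Finset.mem_image_of_mem _ (Finset.mem_univ v), rfl⟩, ?_⟩
      rintro B ⟨hB, hvB⟩
      simp only [Finset.mem_image, Finset.mem_univ, true_and] at hB
      obtain ⟨u, rfl⟩ := hB
      simp only [Set.mem_singleton_iff] at hvB
      subst hvB; rfl
  have hne : {c | ∃ P : Finset (Set V), IsLPPartition G 2 P ∧ P.card = c}.Nonempty :=
    ⟨_, _, hsingl, rfl⟩
  obtain ⟨P, hP, hPcard⟩ : ∃ P : Finset (Set V), IsLPPartition G 2 P ∧ P.card = k :=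
    Nat.sInf_mem hne
  obtain ⟨hPpack, hPpart⟩ := hP
  -- each part's ncard is at most L
  have hbdd : BddAbove {c | ∃ B : Set V, IsLimitedPacking G 2 B ∧ B.ncard = c} := by
    refine ⟨n, ?_⟩
    rintro c ⟨B, _, rfl⟩
    calc B.ncard ≤ (Set.univ : Set V).ncard :=
          Set.ncard_le_ncard (Set.subset_univ B) Set.finite_univ
      _ = n := by rw [Set.ncard_univ, Nat.card_eq_fintype_card]
  have hpartL : ∀ B ∈ P, B.ncard ≤ L := fun B hB =>
    le_csSup hbdd ⟨B, hPpack B hB, rfl⟩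
  -- finset versions of parts
  have hdisj : (P : Set (Set V)).PairwiseDisjoint (fun B : Set V => B.toFinset) := by
    intro B hB C hC hBC
    simp only [Finset.disjoint_left]
    intro u huB huC
    simp only [Set.mem_toFinset] at huB huC
    obtain ⟨D, hD, hDuniq⟩ := hPpart u
    exact hBC ((hDuniq B ⟨hB, huB⟩).trans (hDuniq C ⟨hC, huC⟩).symm)
  have hcover : P.biUnion (fun B : Set V => B.toFinset) = Finset.univ := by
    ext u
    simp only [Finset.mem_biUnion, Finset.mem_univ, iff_true, Set.mem_toFinset]
    obtain ⟨D, hD, _⟩ := hPpart u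
    exact ⟨D, hD.1, hD.2⟩
  -- n ≤ k * L
  have hnkL : n ≤ k * L := by
    have : n = ∑ B ∈ P, (B.toFinset).card := by
      rw [hn, ← Finset.card_univ, ← hcover, Finset.card_biUnion]
      intro B hB C hC hBC
      exact hdisj hB hC hBC
    rw [this, ← hPcard]
    calc ∑ B ∈ P, B.toFinset.card ≤ ∑ B ∈ P, L := by
          refine Finset.sum_le_sum fun B hB => ?_
          rw [← Set.ncard_eq_toFinset_card']
          exact hpartL B hB
      _ = P.card * L := by rw [Finset.sum_const, smul_eq_mul]
  -- per-part double counting: ∑_{u∈B} (deg u + 1) ≤ 2n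
  have hpart2n : ∀ B ∈ P, ∑ u ∈ B.toFinset, (G.degree u + 1) ≤ 2 * n := by
    intro B hB
    have hpack := hPpack B hB
    have key : ∀ u : V, G.degree u + 1 = (insert u (G.neighborFinset u)).card := by
      intro u
      rw [Finset.card_insert_of_notMem (by simp), G.card_neighborFinset_eq_degree]
    calc ∑ u ∈ B.toFinset, (G.degree u + 1)
        = ∑ u ∈ B.toFinset, ∑ v : V, (if v ∈ insert u (G.neighborFinset u) then 1 else 0) := by
          refine Finset.sum_congr rfl fun u _ => ?_
          rw [key u, ← Finset.card_filter]
          congr 1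
          rw [Finset.filter_mem_eq_inter, Finset.univ_inter]
      _ = ∑ v : V, ∑ u ∈ B.toFinset, (if v ∈ insert u (G.neighborFinset u) then 1 else 0) :=
          Finset.sum_comm
      _ = ∑ v : V, (B ∩ closedNbhd G v).ncard := by
          refine Finset.sum_congr rfl fun v _ => ?_
          rw [Set.ncard_eq_toFinset_card']
          have : (B ∩ closedNbhd G v).toFinset
              = B.toFinset.filter (fun u => v ∈ insert u (G.neighborFinset u)) := by
            ext u
            rw [Set.mem_toFinset]
            simp only [Set.mem_toFinset, Set.mem_inter_iff, Finset.mem_filter,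
              Finset.mem_insert, Set.mem_insert_iff, closedNbhd, mem_neighborSet,
              mem_neighborFinset]
            constructor
            · rintro ⟨h1, h2 | h2⟩
              exacts [⟨h1, Or.inl h2.symm⟩, ⟨h1, Or.inr h2.symm⟩]
            · rintro ⟨h1, h2 | h2⟩
              exacts [⟨h1, Or.inl h2.symm⟩, ⟨h1, Or.inr h2.symm⟩]
          rw [this, Finset.card_filter]
      _ ≤ ∑ v : V, 2 := Finset.sum_le_sum fun v _ => hpack v
      _ = 2 * n := by rw [Finset.sum_const, smul_eq_mul, Finset.card_univ, mul_comm]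
  -- 2m + n ≤ 2nk
  have h2m : 2 * m + n ≤ 2 * n * k := by
    have hsum : ∑ u : V, (G.degree u + 1) = 2 * m + n := by
      rw [Finset.sum_add_distrib, G.sum_degrees_eq_twice_card_edges,
        Finset.sum_const, smul_eq_mul, mul_one, Finset.card_univ]
    rw [← hsum, ← Finset.card_univ (α := V)] at *
    calc ∑ u : V, (G.degree u + 1)
        = ∑ B ∈ P, ∑ u ∈ B.toFinset, (G.degree u + 1) := by
          rw [← hcover, Finset.sum_biUnion hdisj]
      _ ≤ ∑ B ∈ P, 2 * n := Finset.sum_le_sum hpart2n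
      _ = k * (2 * n) := by rw [Finset.sum_const, smul_eq_mul, hPcard]
      _ = 2 * n * k := by ring
  -- k ≥ 1
  have hk1 : 1 ≤ k := by
    rw [← hPcard]
    obtain ⟨B, hB, _⟩ := hPpart (Classical.arbitrary V)
    exact Finset.Nonempty.card_pos ⟨B, hB.1⟩
  -- conclude
  have h1 : (2 * m + n : ℤ) ≤ 2 * n * k := by exact_mod_cast h2m
  have h2 : (n : ℤ) ≤ k * L := by exact_mod_cast hnkL
  have h3 : (1 : ℤ) ≤ k := by exact_mod_cast hk1
  nlinarith [mul_nonneg (sub_nonneg.2 h3) (sub_nonneg.2 h2)]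
end

section
/- For any graph G, the 2-limited packing partition number satisfies χ_{×2}(G) ≤ ⌈χ₂(G)/2⌉, where χ₂(G) is the 2-distance chromatic number of G. -/
open SimpleGraph

/-- A `2`-distance coloring with `n` colors: vertices at distance at most `2` get
different colors. -/
def Is2DistanceColoring {V : Type*} (G : SimpleGraph V) (n : ℕ) (c : V → Fin n) : Prop :=
  ∀ u v : V, u ≠ v → (G.Adj u v ∨ ∃ w : V, G.Adj u w ∧ G.Adj w v) → c u ≠ c v

/-- The `2`-distance chromatic number `χ₂(G)`. -/
noncomputable def chi2Dist {V : Type*} (G : SimpleGraph V) : ℕ :=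
  sInf {n | ∃ c : V → Fin n, Is2DistanceColoring G n c}

/-- For any graph `G`, `χ_{×2}(G) ≤ ⌈χ₂(G)/2⌉`. -/
theorem chiLP_le_ceil_chi2 {V : Type*} [Fintype V] (G : SimpleGraph V) :
    chiLP G 2 ≤ (chi2Dist G + 1) / 2 := by
  classical
  have hne : (Fintype.card V) ∈ {n | ∃ c : V → Fin n, Is2DistanceColoring G n c} := by
    refine ⟨fun v => (Fintype.equivFin V) v, ?_⟩
    intro u v huv _ h
    exact huv ((Fintype.equivFin V).injective h)
  set n := chi2Dist G with hn
  obtain ⟨c, hc⟩ : ∃ c : V → Fin n, Is2DistanceColoring G n c :=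
    Nat.sInf_mem ⟨_, hne⟩
  set S : ℕ → Set V := fun j => {v | (c v : ℕ) / 2 = j} with hS
  set P : Finset (Set V) := (Finset.range ((n + 1) / 2)).image S with hP
  -- any two vertices in a closed neighborhood are within distance 2
  have hdist : ∀ v a b : V, a ∈ closedNbhd G v → b ∈ closedNbhd G v → a ≠ b →
      (G.Adj a b ∨ ∃ w : V, G.Adj a w ∧ G.Adj w b) := by
    intro v a b ha hb hab
    rcases ha with rfl | ha
    · rcases hb with rfl | hb
      · exact absurd rfl hab
      · exact Or.inl hb
    · rcases hb with rfl | hb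
      · exact Or.inl (G.adj_symm ha)
      · exact Or.inr ⟨v, G.adj_symm ha, hb⟩
  have hpack : ∀ B ∈ P, IsLimitedPacking G 2 B := by
    intro B hB v
    obtain ⟨j, _, rfl⟩ := Finset.mem_image.mp hB
    have hinj : Set.InjOn (fun a => (⟨(c a : ℕ) % 2, Nat.mod_lt _ (by norm_num)⟩ : Fin 2)) (S j ∩ closedNbhd G v) := by
      intro a ha b hb hfab
      by_contra hab
      have h1 : (c a : ℕ) / 2 = j := ha.1
      have h2 : (c b : ℕ) / 2 = j := hb.1
      have h3 : (c a : ℕ) % 2 % 2 = (c b : ℕ) % 2 % 2 := by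
        have hv := congrArg Fin.val hfab
        simpa [Fin.val_natCast] using hv
      have hcc' := hc a b hab (hdist v a b ha.2 hb.2 hab)
      have hcc : (c a : ℕ) ≠ (c b : ℕ) := fun h => hcc' (Fin.val_injective h)
      omega
    have := Set.ncard_le_ncard_of_injOn (fun a => (⟨(c a : ℕ) % 2, Nat.mod_lt _ (by norm_num)⟩ : Fin 2))
      (fun a _ => Set.mem_univ _) hinj (Set.finite_univ)
    simpa [Set.ncard_univ] using this
  have hpart : ∀ v : V, ∃! B : Set V, B ∈ P ∧ v ∈ B := by
    intro v
    have hjm : (c v : ℕ) / 2 ∈ Finset.range ((n + 1) / 2) := by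
      have := (c v).isLt
      simp only [Finset.mem_range]
      omega
    refine ⟨S ((c v : ℕ) / 2), ⟨Finset.mem_image.mpr ⟨_, hjm, rfl⟩, rfl⟩, ?_⟩
    rintro B ⟨hBP, hvB⟩
    obtain ⟨j, _, rfl⟩ := Finset.mem_image.mp hBP
    have : (c v : ℕ) / 2 = j := hvB
    rw [this]
  have hle : chiLP G 2 ≤ P.card :=
    Nat.sInf_le ⟨P, ⟨hpack, hpart⟩, rfl⟩
  calc chiLP G 2 ≤ P.card := hle
    _ ≤ (Finset.range ((n + 1) / 2)).card := Finset.card_image_le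
    _ = (n + 1) / 2 := Finset.card_range _
end

section
/- For any graph G of order n, χ_{×2}(G) + χ_{×2}(Ḡ) ≥ (n+2)/2, where Ḡ is the complement of G. -/
open SimpleGraph

/-- There is a minimum-size limited packing partition (singletons give a witness). -/
lemma exists_LPPartition {V : Type*} [Fintype V] (G : SimpleGraph V) (k : ℕ) (hk : 1 ≤ k) :
    ∃ P : Finset (Set V), IsLPPartition G k P ∧ P.card = chiLP G k := by
  classical
  have hne : {n | ∃ P : Finset (Set V), IsLPPartition G k P ∧ P.card = n}.Nonempty := by
    refine ⟨_, Finset.univ.image (fun v => ({v} : Set V)), ?_, rfl⟩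
    constructor
    · intro B hB
      simp only [Finset.mem_image] at hB
      obtain ⟨v, -, rfl⟩ := hB
      intro w
      calc (({v} : Set V) ∩ closedNbhd G w).ncard
          ≤ ({v} : Set V).ncard :=
            Set.ncard_le_ncard Set.inter_subset_left (Set.finite_singleton v)
        _ ≤ k := by simpa using hk
    · intro v
      refine ⟨{v}, ⟨Finset.mem_image_of_mem _ (Finset.mem_univ v), rfl⟩, ?_⟩
      rintro B ⟨hB, hvB⟩
      simp only [Finset.mem_image] at hB
      obtain ⟨u, -, rfl⟩ := hB
      simp only [Set.mem_singleton_iff] at hvB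
      subst hvB; rfl
  exact Nat.sInf_mem hne

/-- Every closed neighborhood has at most `k * P.card` vertices. -/
lemma ncard_closedNbhd_le {V : Type*} [Fintype V] (G : SimpleGraph V) (k : ℕ)
    (P : Finset (Set V)) (hP : IsLPPartition G k P) (v : V) :
    (closedNbhd G v).ncard ≤ k * P.card := by
  classical
  have hsub : (closedNbhd G v).toFinset ⊆
      P.biUnion (fun B => (B ∩ closedNbhd G v).toFinset) := by
    intro x hx
    obtain ⟨B, ⟨hBP, hxB⟩, -⟩ := hP.2 x
    simp only [Finset.mem_biUnion, Set.mem_toFinset] at hx ⊢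
    exact ⟨B, hBP, hxB, hx⟩
  calc (closedNbhd G v).ncard = (closedNbhd G v).toFinset.card :=
        Set.ncard_eq_toFinset_card' _
    _ ≤ (P.biUnion (fun B => (B ∩ closedNbhd G v).toFinset)).card :=
        Finset.card_le_card hsub
    _ ≤ ∑ B ∈ P, ((B ∩ closedNbhd G v).toFinset).card := Finset.card_biUnion_le
    _ ≤ ∑ _B ∈ P, k := Finset.sum_le_sum (fun B hB => by
        rw [← Set.ncard_eq_toFinset_card']; exact hP.1 B hB v)
    _ = k * P.card := by rw [Finset.sum_const, smul_eq_mul, mul_comm]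

lemma ncard_closedNbhd {V : Type*} [Fintype V] (G : SimpleGraph V) (v : V) :
    (closedNbhd G v).ncard = (G.neighborSet v).ncard + 1 := by
  rw [closedNbhd, Set.ncard_insert_of_notMem (by simp) (Set.toFinite _)]

lemma ncard_neighborSet_add_compl {V : Type*} [Fintype V] (G : SimpleGraph V) (v : V) :
    (G.neighborSet v).ncard + (Gᶜ.neighborSet v).ncard + 1 = Fintype.card V := by
  rw [neighborSet_compl]
  have hv : v ∈ (G.neighborSet v)ᶜ := by simp
  have h1 : ((G.neighborSet v)ᶜ \ {v}).ncard + 1 = ((G.neighborSet v)ᶜ).ncard := by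
    rw [← Set.ncard_diff_singleton_add_one hv (Set.toFinite _)]
  have h2 := Set.ncard_add_ncard_compl (G.neighborSet v) (Set.toFinite _) (Set.toFinite _)
  have h3 : Nat.card V = Fintype.card V := Nat.card_eq_fintype_card
  omega

lemma sum_ncard_neighborSet {V : Type*} [Fintype V] (G : SimpleGraph V) :
    ∃ E, ∑ v, (G.neighborSet v).ncard = 2 * E := by
  classical
  refine ⟨G.edgeFinset.card, ?_⟩
  rw [← G.sum_degrees_eq_twice_card_edges]
  refine Finset.sum_congr rfl fun v _ => ?_
  rw [Set.ncard_eq_toFinset_card']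
  rfl

/-- Nordhaus–Gaddum: for any graph `G` of order `n`,
`χ_{×2}(G) + χ_{×2}(Ġ) ≥ (n+2)/2`. -/
theorem chiLP_two_nordhaus_gaddum {V : Type*} [Fintype V] [Nonempty V]
    (G : SimpleGraph V) :
    ((Fintype.card V : ℚ) + 2) / 2 ≤ chiLP G 2 + chiLP Gᶜ 2 := by
  classical
  obtain ⟨P, hP, hPcard⟩ := exists_LPPartition G 2 (by norm_num)
  obtain ⟨Q, hQ, hQcard⟩ := exists_LPPartition Gᶜ 2 (by norm_num)
  set n := Fintype.card V with hn
  set p := chiLP G 2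
  set q := chiLP Gᶜ 2
  -- per-vertex degree bounds: deg_G v + 1 ≤ 2p, deg_Ḡ v + 1 ≤ 2q
  have hdG : ∀ v : V, (G.neighborSet v).ncard + 1 ≤ 2 * p := by
    intro v
    have := ncard_closedNbhd_le G 2 P hP v
    rw [ncard_closedNbhd, hPcard] at this
    omega
  have hdGc : ∀ v : V, (Gᶜ.neighborSet v).ncard + 1 ≤ 2 * q := by
    intro v
    have := ncard_closedNbhd_le Gᶜ 2 Q hQ v
    rw [ncard_closedNbhd, hQcard] at this
    omega
  have hsum : ∀ v : V, (G.neighborSet v).ncard + (Gᶜ.neighborSet v).ncard + 1 = n :=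
    ncard_neighborSet_add_compl G
  obtain ⟨v0⟩ := ‹Nonempty V›
  have key : n + 2 ≤ 2 * p + 2 * q := by
    by_contra hcon
    have heq : 2 * p + 2 * q = n + 1 := by
      have h1 := hdG v0
      have h2 := hdGc v0
      have h3 := hsum v0
      omega
    -- n is odd, and every vertex has degree exactly 2p - 1 (odd): contradiction with handshake
    have hall : ∀ v : V, (G.neighborSet v).ncard + 1 = 2 * p := by
      intro v
      have h1 := hdG v
      have h2 := hdGc v
      have h3 := hsum v
      omega
    obtain ⟨E, hE⟩ := sum_ncard_neighborSet G
    have hsum2 : ∑ v : V, ((G.neighborSet v).ncard + 1) = ∑ _v : V, 2 * p :=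
      Finset.sum_congr rfl fun v _ => hall v
    rw [Finset.sum_add_distrib, hE, Finset.sum_const, Finset.sum_const] at hsum2
    simp only [Finset.card_univ, smul_eq_mul, ← hn, mul_one] at hsum2
    -- hsum2 : 2 * E + n = n * (2 * p)
    have hre : n * (2 * p) = 2 * (n * p) := by ring
    rw [hre] at hsum2
    generalize n * p = m at hsum2
    omega
  have hcast : (n : ℚ) + 2 ≤ 2 * (p : ℚ) + 2 * q := by exact_mod_cast key
  linarith
end

section
/- Let H be the graph obtained from the complete graph K_{2p} (p ≥ 3) by removing a perfect matching. Then L₂(H) = 2 and χ_{×2}(H) = p, and consequently χ_{×2}(H) + χ_{×2}(H̄) = p + 1 = (|V(H)|+2)/2. -/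
open SimpleGraph

/-- The perfect matching graph on `2p` vertices: `(i, b)` is adjacent to `(i, ¬b)`. -/
def matchingGraph (p : ℕ) : SimpleGraph (Fin p × Bool) where
  Adj x y := x.1 = y.1 ∧ x ≠ y
  symm := by
    constructor
    rintro ⟨a, b⟩ ⟨c, d⟩ ⟨h1, h2⟩
    exact ⟨h1.symm, fun h => h2 h.symm⟩
  loopless := by
    constructor
    rintro ⟨a, b⟩ ⟨h1, h2⟩
    exact h2 rfl

lemma cn_compl (p : ℕ) (v : Fin p × Bool) :
    closedNbhd (matchingGraph p)ᶜ v = {(v.1, !v.2)}ᶜ := by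
  obtain ⟨i, b⟩ := v
  ext ⟨j, c⟩
  simp only [closedNbhd, matchingGraph, Set.mem_insert_iff, mem_neighborSet, compl_adj,
    Set.mem_compl_iff, Set.mem_singleton_iff, Prod.mk.injEq, Prod.ext_iff, ne_eq, not_and]
  by_cases hij : i = j
  · subst hij; cases b <;> cases c <;> simp
  · have h2 : ¬ j = i := fun h => hij h.symm
    simp [hij, h2]

lemma cn_match (p : ℕ) (v : Fin p × Bool) :
    closedNbhd (matchingGraph p) v = {v, (v.1, !v.2)} := by
  obtain ⟨i, b⟩ := v
  ext ⟨j, c⟩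
  simp only [closedNbhd, matchingGraph, Set.mem_insert_iff, mem_neighborSet,
    Set.mem_singleton_iff, Prod.mk.injEq, Prod.ext_iff, ne_eq]
  by_cases hij : i = j
  · subst hij; cases b <;> cases c <;> simp
  · have h2 : ¬ j = i := fun h => hij h.symm
    simp [hij, h2]

lemma packing_of_ncard_le {V : Type*} (G : SimpleGraph V) (B : Set V) (hfin : B.Finite)
    (h : B.ncard ≤ 2) : IsLimitedPacking G 2 B := fun v =>
  le_trans (Set.ncard_le_ncard Set.inter_subset_left hfin) h

lemma packing_ncard_le (p : ℕ) (hp : 3 ≤ p) (B : Set (Fin p × Bool))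
    (hB : IsLimitedPacking (matchingGraph p)ᶜ 2 B) : B.ncard ≤ 2 := by
  by_contra h
  push_neg at h
  have key : ∀ v : Fin p × Bool, (v.1, !v.2) ∈ B := by
    intro v
    by_contra hv
    have hB' := hB v
    rw [cn_compl, ← Set.diff_eq, Set.diff_singleton_eq_self hv] at hB'
    omega
  have hBuniv : B = Set.univ := by
    ext w
    simp only [Set.mem_univ, iff_true]
    have := key (w.1, !w.2)
    simpa using this
  have h1 := hB (⟨0, by omega⟩, false)
  rw [cn_compl, ← Set.diff_eq, hBuniv,
    Set.ncard_diff_singleton_of_mem (Set.mem_univ _)] at h1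
  rw [Set.ncard_univ, Nat.card_eq_fintype_card, Fintype.card_prod, Fintype.card_fin,
    Fintype.card_bool] at h1
  omega

lemma pair_set_eq (p : ℕ) (i : Fin p) :
    {x : Fin p × Bool | x.1 = i} = {(i, false), (i, true)} := by
  ext ⟨j, c⟩
  cases c <;> simp [Prod.ext_iff]

lemma pair_ncard (p : ℕ) (i : Fin p) : ({x : Fin p × Bool | x.1 = i}).ncard = 2 := by
  rw [pair_set_eq]
  rw [Set.ncard_pair (by simp)]

lemma L2_eq (p : ℕ) (hp : 3 ≤ p) : L2 (matchingGraph p)ᶜ = 2 := by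
  have hbound : ∀ n ∈ {n | ∃ B : Set (Fin p × Bool),
      IsLimitedPacking (matchingGraph p)ᶜ 2 B ∧ B.ncard = n}, n ≤ 2 := by
    rintro n ⟨B, hB, rfl⟩
    exact packing_ncard_le p hp B hB
  have hmem : 2 ∈ {n | ∃ B : Set (Fin p × Bool),
      IsLimitedPacking (matchingGraph p)ᶜ 2 B ∧ B.ncard = n} := by
    refine ⟨{x | x.1 = ⟨0, by omega⟩}, ?_, pair_ncard p _⟩
    exact packing_of_ncard_le _ _ (Set.toFinite _) (le_of_eq (pair_ncard p _))
  exact le_antisymm (csSup_le ⟨2, hmem⟩ hbound) (le_csSup ⟨2, hbound⟩ hmem)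

lemma chiLP_compl_eq (p : ℕ) (hp : 3 ≤ p) : chiLP (matchingGraph p)ᶜ 2 = p := by
  classical
  have hmem : p ∈ {n | ∃ P : Finset (Set (Fin p × Bool)),
      IsLPPartition (matchingGraph p)ᶜ 2 P ∧ P.card = n} := by
    refine ⟨Finset.image (fun i : Fin p => ({x | x.1 = i} : Set (Fin p × Bool)))
      Finset.univ, ⟨?_, ?_⟩, ?_⟩
    · intro B hB
      simp only [Finset.mem_image, Finset.mem_univ, true_and] at hB
      obtain ⟨i, rfl⟩ := hB
      exact packing_of_ncard_le _ _ (Set.toFinite _) (le_of_eq (pair_ncard p i))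
    · intro v
      refine ⟨{x | x.1 = v.1}, ⟨?_, rfl⟩, ?_⟩
      · exact Finset.mem_image.2 ⟨v.1, Finset.mem_univ _, rfl⟩
      · rintro B ⟨hB, hvB⟩
        simp only [Finset.mem_image, Finset.mem_univ, true_and] at hB
        obtain ⟨i, rfl⟩ := hB
        have : v.1 = i := hvB
        rw [this]
    · rw [Finset.card_image_of_injective _ ?_, Finset.card_univ, Fintype.card_fin]
      intro i j hij
      have h1 : (i, false) ∈ ({x : Fin p × Bool | x.1 = i}) := rfl
      rw [show ({x : Fin p × Bool | x.1 = i}) = {x | x.1 = j} from hij] at h1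
      exact h1
  have hlow : ∀ n ∈ {n | ∃ P : Finset (Set (Fin p × Bool)),
      IsLPPartition (matchingGraph p)ᶜ 2 P ∧ P.card = n}, p ≤ n := by
    rintro n ⟨P, ⟨hpack, hpart⟩, rfl⟩
    set f : Fin p × Bool → Set (Fin p × Bool) := fun v => (hpart v).choose with hf
    have hf1 : ∀ v, f v ∈ P := fun v => (hpart v).choose_spec.1.1
    have hf2 : ∀ v, v ∈ f v := fun v => (hpart v).choose_spec.1.2
    have h1 : (Finset.univ : Finset (Fin p × Bool)).card ≤
        2 * (Finset.univ.image f).card := by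
      refine Finset.card_le_mul_card_image _ 2 ?_
      intro B hB
      simp only [Finset.mem_image, Finset.mem_univ, true_and] at hB
      obtain ⟨w, rfl⟩ := hB
      have hsub : Finset.univ.filter (fun x => f x = f w) ⊆
          (Set.toFinite (f w)).toFinset := by
        intro x hx
        simp only [Finset.mem_filter, Finset.mem_univ, true_and] at hx
        rw [Set.Finite.mem_toFinset]
        exact hx ▸ hf2 x
      calc (Finset.univ.filter (fun x => f x = f w)).card
          ≤ (Set.toFinite (f w)).toFinset.card := Finset.card_le_card hsub
        _ = (f w).ncard := (Set.ncard_eq_toFinset_card _ _).symm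
        _ ≤ 2 := packing_ncard_le p hp _ (hpack _ (hf1 w))
    have h2 : (Finset.univ.image f).card ≤ P.card :=
      Finset.card_le_card (fun B hB => by
        simp only [Finset.mem_image, Finset.mem_univ, true_and] at hB
        obtain ⟨w, rfl⟩ := hB
        exact hf1 w)
    rw [Finset.card_univ, Fintype.card_prod, Fintype.card_fin, Fintype.card_bool] at h1
    omega
  exact le_antisymm (Nat.sInf_le hmem) (le_csInf ⟨p, hmem⟩ hlow)

lemma chiLP_match_eq (p : ℕ) (hp : 3 ≤ p) : chiLP (matchingGraph p) 2 = 1 := by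
  have hmem : 1 ∈ {n | ∃ P : Finset (Set (Fin p × Bool)),
      IsLPPartition (matchingGraph p) 2 P ∧ P.card = n} := by
    refine ⟨{Set.univ}, ⟨?_, ?_⟩, Finset.card_singleton _⟩
    · intro B hB
      rw [Finset.mem_singleton] at hB
      subst hB
      intro v
      rw [Set.univ_inter, cn_match]
      calc ({v, (v.1, !v.2)} : Set (Fin p × Bool)).ncard
          ≤ ({(v.1, !v.2)} : Set (Fin p × Bool)).ncard + 1 := Set.ncard_insert_le _ _
        _ ≤ 2 := by rw [Set.ncard_singleton]
    · intro v
      refine ⟨Set.univ, ⟨Finset.mem_singleton_self _, Set.mem_univ _⟩, ?_⟩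
      rintro B ⟨hB, -⟩
      exact Finset.mem_singleton.1 hB
  have hlow : ∀ n ∈ {n | ∃ P : Finset (Set (Fin p × Bool)),
      IsLPPartition (matchingGraph p) 2 P ∧ P.card = n}, 1 ≤ n := by
    rintro n ⟨P, ⟨-, hpart⟩, rfl⟩
    rcases Nat.eq_zero_or_pos P.card with h0 | h
    · exfalso
      rw [Finset.card_eq_zero] at h0
      obtain ⟨B, ⟨hBP, -⟩, -⟩ := hpart (⟨0, by omega⟩, false)
      simp [h0] at hBP
    · exact h
  exact le_antisymm (Nat.sInf_le hmem) (le_csInf ⟨1, hmem⟩ hlow)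

/-- Let `H` be `K_{2p}` (`p ≥ 3`) minus a perfect matching. Then `L₂(H) = 2`,
`χ_{×2}(H) = p`, and `χ_{×2}(H) + χ_{×2}(H̄) = p + 1 = (|V(H)| + 2)/2`. -/
theorem matching_complement_chiLP (p : ℕ) (hp : 3 ≤ p) :
    L2 (matchingGraph p)ᶜ = 2 ∧ chiLP (matchingGraph p)ᶜ 2 = p ∧
      chiLP (matchingGraph p)ᶜ 2 + chiLP ((matchingGraph p)ᶜ)ᶜ 2 = p + 1 ∧
      p + 1 = (Fintype.card (Fin p × Bool) + 2) / 2 := by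
  refine ⟨L2_eq p hp, chiLP_compl_eq p hp, ?_, ?_⟩
  · rw [compl_compl, chiLP_compl_eq p hp, chiLP_match_eq p hp]
  · rw [Fintype.card_prod, Fintype.card_fin, Fintype.card_bool]
    omega
end

section
/- Let G be a connected graph of order n ≥ 2 and H a graph of order at least 2. Then L₂(G∘H) ≤ 2(n − Δ(G)), where G∘H is the lexicographic product and Δ(G) the maximum degree of G. -/
open SimpleGraph

/-- The lexicographic product `G ∘ H` of two simple graphs. -/
def lexProd {V W : Type*} (G : SimpleGraph V) (H : SimpleGraph W) : SimpleGraph (V × W) where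
  Adj x y := G.Adj x.1 y.1 ∨ (x.1 = y.1 ∧ H.Adj x.2 y.2)
  symm := by
    constructor
    rintro ⟨a, b⟩ ⟨c, d⟩ (h | ⟨h1, h2⟩)
    · exact Or.inl h.symm
    · exact Or.inr ⟨h1.symm, h2.symm⟩
  loopless := by
    constructor
    rintro ⟨a, b⟩ (h | ⟨h1, h2⟩)
    · exact G.irrefl h
    · exact H.irrefl h2

lemma lexProd_adj {V W : Type*} (G : SimpleGraph V) (H : SimpleGraph W) (x y : V × W) :
    (lexProd G H).Adj x y ↔ G.Adj x.1 y.1 ∨ (x.1 = y.1 ∧ H.Adj x.2 y.2) := Iff.rfl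

lemma mem_closedNbhd_iff {V : Type*} (G : SimpleGraph V) (v x : V) :
    x ∈ closedNbhd G v ↔ x = v ∨ G.Adj v x := by
  simp [closedNbhd]

/-- For a connected graph `G` of order `n ≥ 2` and a graph `H` of order at least `2`,
`L₂(G ∘ H) ≤ 2(n − Δ(G))`. -/
theorem L2_lexProd_le {V W : Type*} [Fintype V] [Fintype W]
    (G : SimpleGraph V) [DecidableRel G.Adj] (H : SimpleGraph W)
    (hG : G.Connected) (hn : 2 ≤ Fintype.card V) (hH : 2 ≤ Fintype.card W) :
    L2 (lexProd G H) ≤ 2 * (Fintype.card V - G.maxDegree) := by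
  classical
  have hWne : Nonempty W := Fintype.card_pos_iff.mp (by omega)
  have hVne : Nonempty V := Fintype.card_pos_iff.mp (by omega)
  obtain ⟨h₀⟩ := hWne
  obtain ⟨v, hv⟩ := G.exists_maximal_degree_vertex
  -- every vertex has a neighbor
  have hnbr : ∀ g : V, ∃ u, G.Adj g u := by
    intro g
    obtain ⟨g', hg'⟩ := Fintype.exists_ne_of_one_lt_card (by omega) g
    obtain ⟨w⟩ := hG.preconnected g g'
    exact ⟨w.getVert 1, SimpleGraph.Walk.adj_snd
      (SimpleGraph.Walk.not_nil_of_ne (Ne.symm hg'))⟩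
  have hne : (0:ℕ) ∈ {n | ∃ B : Set (V × W),
      IsLimitedPacking (lexProd G H) 2 B ∧ B.ncard = n} :=
    ⟨∅, fun x => by simp [IsLimitedPacking], by simp⟩
  refine csSup_le ⟨0, hne⟩ ?_
  rintro m ⟨B, hB, rfl⟩
  set T : Finset (V × W) := B.toFinset with hT
  have hTcard : B.ncard = T.card := Set.ncard_eq_toFinset_card' B
  -- key bound
  have hB2 : ∀ (x : V × W) (S : Finset (V × W)), S ⊆ T →
      (∀ y ∈ S, y ∈ closedNbhd (lexProd G H) x) → S.card ≤ 2 := by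
    intro x S hST hSN
    have h1 : S.card ≤ (B ∩ closedNbhd (lexProd G H) x).ncard := by
      rw [Set.ncard_eq_toFinset_card']
      apply Finset.card_le_card
      intro y hy
      rw [Set.mem_toFinset]
      refine ⟨?_, hSN y hy⟩
      have h2 := hST hy
      rw [hT, Set.mem_toFinset] at h2
      exact h2
    exact h1.trans (hB x)
  have fiber_bound : ∀ g : V, (T.filter (fun x => x.1 = g)).card ≤ 2 := by
    intro g
    obtain ⟨u, hu⟩ := hnbr g
    apply hB2 (u, h₀) _ (Finset.filter_subset _ _)
    intro y hy
    rw [Finset.mem_filter] at hy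
    rw [mem_closedNbhd_iff]
    exact Or.inr (Or.inl (by rw [hy.2]; exact hu.symm))
  set S1 : Finset (V × W) := T.filter (fun x => x.1 = v) with hS1def
  set S2 : Finset (V × W) := T.filter (fun x => x.1 ∈ G.neighborFinset v) with hS2def
  have hdisj : Disjoint S1 S2 := by
    rw [Finset.disjoint_left]
    intro x hx1 hx2
    rw [hS1def, Finset.mem_filter] at hx1
    rw [hS2def, Finset.mem_filter, SimpleGraph.mem_neighborFinset] at hx2
    exact G.irrefl (hx1.2 ▸ hx2.2)
  -- the heart: at most 2 vertices of B in N[v] × W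
  have hS1S2 : S1.card + S2.card ≤ 2 := by
    rcases Finset.eq_empty_or_nonempty S2 with h2 | ⟨⟨u, h1⟩, hm2⟩
    · rw [h2, Finset.card_empty]
      simpa using fiber_bound v
    · rw [hS2def, Finset.mem_filter, SimpleGraph.mem_neighborFinset] at hm2
      have huv : G.Adj v u := hm2.2
      -- S1 together with (u, h1) sits in N[(u, h1)]
      have hS1le : S1.card ≤ 1 := by
        have hnot : (u, h1) ∉ S1 := by
          rw [hS1def, Finset.mem_filter]
          rintro ⟨-, h⟩
          exact G.irrefl (h ▸ huv)
        have := hB2 (u, h1) (insert (u, h1) S1) ?_ ?_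
        · rw [Finset.card_insert_of_notMem hnot] at this; omega
        · rw [Finset.insert_subset_iff]
          exact ⟨hm2.1, Finset.filter_subset _ _⟩
        · intro y hy
          rw [Finset.mem_insert] at hy
          rw [mem_closedNbhd_iff]
          rcases hy with rfl | hy
          · exact Or.inl rfl
          · simp only [hS1def, Finset.mem_filter] at hy
            exact Or.inr (Or.inl (by rw [hy.2]; exact huv.symm))
      rcases Finset.eq_empty_or_nonempty S1 with h1e | ⟨⟨v', h0⟩, hm1⟩
      · rw [h1e, Finset.card_empty]
        have hS2le : S2.card ≤ 2 := by
          apply hB2 (v, h₀) _ (Finset.filter_subset _ _)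
          intro y hy
          simp only [hS2def, Finset.mem_filter, SimpleGraph.mem_neighborFinset] at hy
          rw [mem_closedNbhd_iff]
          exact Or.inr (Or.inl hy.2)
        omega
      · rw [hS1def, Finset.mem_filter] at hm1
        obtain ⟨hm1T, rfl⟩ : ((v', h0) : V × W) ∈ T ∧ v' = v := hm1
        have hS2le : S2.card ≤ 1 := by
          have hnot : (v', h0) ∉ S2 := by
            rw [hS2def, Finset.mem_filter, SimpleGraph.mem_neighborFinset]
            rintro ⟨-, h⟩
            exact G.irrefl h
          have := hB2 (v', h0) (insert (v', h0) S2) ?_ ?_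
          · rw [Finset.card_insert_of_notMem hnot] at this; omega
          · rw [Finset.insert_subset_iff]
            exact ⟨hm1T, Finset.filter_subset _ _⟩
          · intro y hy
            rw [Finset.mem_insert] at hy
            rw [mem_closedNbhd_iff]
            rcases hy with rfl | hy
            · exact Or.inl rfl
            · simp only [hS2def, Finset.mem_filter, SimpleGraph.mem_neighborFinset] at hy
              exact Or.inr (Or.inl hy.2)
        omega
  -- fiberwise counting
  set Nv : Finset V := insert v (G.neighborFinset v) with hNv
  have hNvcard : Nv.card = G.maxDegree + 1 := by
    rw [hNv, Finset.card_insert_of_notMem (G.notMem_neighborFinset_self v),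
      G.card_neighborFinset_eq_degree, hv]
  have hsum : T.card = ∑ g : V, (T.filter (fun x => x.1 = g)).card :=
    Finset.card_eq_sum_card_fiberwise (fun x _ => Finset.mem_univ x.1)
  have hsplit : (Finset.univ : Finset V) = Nv ∪ (Finset.univ \ Nv) := by
    rw [Finset.union_sdiff_of_subset (Finset.subset_univ _)]
  have hsumNv : ∑ g ∈ Nv, (T.filter (fun x => x.1 = g)).card = S1.card + S2.card := by
    rw [hNv, Finset.sum_insert (G.notMem_neighborFinset_self v)]
    congr 1
    rw [hS2def]
    rw [Finset.card_eq_sum_card_fiberwise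
      (s := T.filter (fun x => x.1 ∈ G.neighborFinset v))
      (f := Prod.fst) (t := G.neighborFinset v)
      (fun x hx => (Finset.mem_filter.mp hx).2)]
    apply Finset.sum_congr rfl
    intro g hg
    rw [Finset.filter_filter]
    congr 1
    apply Finset.filter_congr
    intro x _
    constructor
    · intro h; exact ⟨by rw [h]; exact hg, h⟩
    · rintro ⟨-, h⟩; exact h
  have hrest : ∑ g ∈ Finset.univ \ Nv, (T.filter (fun x => x.1 = g)).card
      ≤ 2 * (Fintype.card V - (G.maxDegree + 1)) := by
    calc ∑ g ∈ Finset.univ \ Nv, (T.filter (fun x => x.1 = g)).card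
        ≤ ∑ _g ∈ Finset.univ \ Nv, 2 := Finset.sum_le_sum (fun g _ => fiber_bound g)
      _ = (Finset.univ \ Nv).card * 2 := by rw [Finset.sum_const, smul_eq_mul]
      _ = 2 * (Fintype.card V - (G.maxDegree + 1)) := by
          rw [Finset.card_sdiff_of_subset (Finset.subset_univ _), Finset.card_univ, hNvcard]
          ring
  have hdeg : G.maxDegree + 1 ≤ Fintype.card V := by
    rw [hv]; exact G.degree_lt_card_verts v
  have : T.card ≤ 2 * (Fintype.card V - (G.maxDegree + 1)) + 2 := by
    rw [hsum, hsplit, Finset.sum_union (Finset.disjoint_sdiff), hsumNv]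
    omega
  rw [hTcard]
  omega
end

section
/- Let G be a graph with a cycle such that not every set of three vertices of G has a common neighbor. Then L_{2,t}(G) ≥ g(G), where g(G) is the girth of G. -/
open SimpleGraph

/-- `B` is a `k`-total limited packing: every open neighborhood contains at most `k`
vertices of `B`. -/
def IsTotalLimitedPacking {V : Type*} (G : SimpleGraph V) (k : ℕ) (B : Set V) : Prop :=
  ∀ v : V, (B ∩ G.neighborSet v).ncard ≤ k

/-- The `2`-total limited packing number `L_{2,t}(G)`. -/
noncomputable def L2t {V : Type*} (G : SimpleGraph V) : ℕ :=
  sSup {n | ∃ B : Set V, IsTotalLimitedPacking G 2 B ∧ B.ncard = n}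

open SimpleGraph.Walk

section Aux

variable {V : Type*} {G : SimpleGraph V}

private lemma girth_le_length' {a : V} {w : G.Walk a a} (hw : w.IsCycle) :
    G.girth ≤ w.length := by
  have h1 : G.egirth ≤ (w.length : ℕ∞) :=
    iInf_le_of_le a (iInf_le_of_le w (iInf_le_of_le hw le_rfl))
  have h2 := ENat.toNat_le_toNat h1 (by simp)
  simpa [girth] using h2

private lemma girth_le_path_aux {v x y : V} (hvx : G.Adj v x) (hvy : G.Adj v y)
    (hxy : x ≠ y) (w : G.Walk x y) (hw : w.IsPath) (hv : v ∉ w.support) :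
    G.girth ≤ w.length + 2 := by
  have hyv : G.Adj y v := hvy.symm
  have hp : (w.concat hyv).IsPath := by
    rw [← isPath_reverse_iff, reverse_concat, cons_isPath_iff]
    exact ⟨hw.reverse, by simpa [support_reverse] using hv⟩
  have hedge : s(v, x) ∉ (w.concat hyv).edges := by
    rw [edges_concat]
    intro hmem
    have hmem' : s(v, x) ∈ w.edges ∨ (v = y ∧ x = v) ∨ x = y := by
      simpa [List.concat_eq_append] using hmem
    rcases hmem' with h1 | ⟨h3, h4⟩ | h4
    · exact hv (w.fst_mem_support_of_mem_edges h1)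
    · exact hvx.ne h4.symm
    · exact hxy h4
  have hcyc : (Walk.cons hvx (w.concat hyv)).IsCycle :=
    (cons_isCycle_iff _ hvx).mpr ⟨hp, hedge⟩
  have h5 := girth_le_length' hcyc
  rw [length_cons, length_concat] at h5
  omega

private lemma two_arcs [DecidableEq V] {v x y z w : V} (hvx : G.Adj v x) (hvy : G.Adj v y)
    (hvz : G.Adj v z) (hxy : x ≠ y) (hxz : x ≠ z) (hyz : y ≠ z) (p : G.Walk x w)
    (hp : p.IsPath) (hv : v ∉ p.support) (hy : y ∈ p.support) (hz : z ∈ p.support) :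
    2 * G.girth ≤ p.length + 4 := by
  by_cases hzy : z ∈ (p.takeUntil y hy).support
  · have hp2path : (p.takeUntil y hy).IsPath := hp.takeUntil hy
    have hA1 : G.girth ≤ ((p.takeUntil y hy).takeUntil z hzy).length + 2 :=
      girth_le_path_aux hvx hvz hxz _ (hp2path.takeUntil hzy)
        (fun hmem => hv (p.support_takeUntil_subset hy
          ((p.takeUntil y hy).support_takeUntil_subset hzy hmem)))
    have hA2 : G.girth ≤ ((p.takeUntil y hy).dropUntil z hzy).length + 2 :=
      girth_le_path_aux hvz hvy hyz.symm _ (hp2path.dropUntil hzy)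
        (fun hmem => hv (p.support_takeUntil_subset hy
          ((p.takeUntil y hy).support_dropUntil_subset hzy hmem)))
    have hsum : ((p.takeUntil y hy).takeUntil z hzy).length
        + ((p.takeUntil y hy).dropUntil z hzy).length = (p.takeUntil y hy).length := by
      have h6 := congr_arg Walk.length ((p.takeUntil y hy).take_spec hzy)
      rwa [length_append] at h6
    have hle : (p.takeUntil y hy).length ≤ p.length := p.length_takeUntil_le hy
    omega
  · have hzd : z ∈ (p.dropUntil y hy).support := by
      have h7 := hz
      rw [← take_spec p hy, mem_support_append_iff] at h7
      tauto
    have hA1 : G.girth ≤ (p.takeUntil y hy).length + 2 :=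
      girth_le_path_aux hvx hvy hxy _ (hp.takeUntil hy)
        (fun hmem => hv (p.support_takeUntil_subset hy hmem))
    have hA2 : G.girth ≤ ((p.dropUntil y hy).takeUntil z hzd).length + 2 :=
      girth_le_path_aux hvy hvz hyz _ ((hp.dropUntil hy).takeUntil hzd)
        (fun hmem => hv (p.support_dropUntil_subset hy
          ((p.dropUntil y hy).support_takeUntil_subset hzd hmem)))
    have hsum : (p.takeUntil y hy).length + (p.dropUntil y hy).length = p.length := by
      have h8 := congr_arg Walk.length (p.take_spec hy)
      rwa [length_append] at h8
    have hle := (p.dropUntil y hy).length_takeUntil_le hzd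
    omega

private lemma three_nbrs [DecidableEq V] {v x y z : V}
    (hvx : G.Adj v x) (hvy : G.Adj v y) (hvz : G.Adj v z)
    (hxy : x ≠ y) (hxz : x ≠ z) (hyz : y ≠ z) :
    ∀ {u w : V} (p : G.Walk u w), p.IsPath → v ∉ p.support →
      x ∈ p.support → y ∈ p.support → z ∈ p.support → 2 * G.girth ≤ p.length + 4 := by
  intro u w p
  induction p with
  | nil =>
    intro _ _ hx hy _
    rw [support_nil, List.mem_singleton] at hx hy
    exact absurd (hx.trans hy.symm) hxy
  | @cons u u' w h q ih =>
    intro hp hv hx hy hz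
    have hx' := hx; have hy' := hy; have hz' := hz
    rw [support_cons] at hx' hy' hz'
    rcases List.mem_cons.mp hx' with rfl | hxq
    · exact two_arcs hvx hvy hvz hxy hxz hyz _ hp hv hy hz
    rcases List.mem_cons.mp hy' with rfl | hyq
    · exact two_arcs hvy hvx hvz hxy.symm hyz hxz _ hp hv hx hz
    rcases List.mem_cons.mp hz' with rfl | hzq
    · exact two_arcs hvz hvx hvy hxz.symm hyz.symm hxy _ hp hv hx hy
    · have hq := (cons_isPath_iff h q).mp hp
      have h9 := ih hq.1 (fun hm => hv (by simp [support_cons, hm])) hxq hyq hzq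
      rw [length_cons]
      omega

private lemma mem_tail_of_closed {a x : V} (c : G.Walk a a) (hnil : ¬ c.Nil)
    (hx : x ∈ c.support) : x ∈ c.support.tail := by
  obtain ⟨s, hadj, q, rfl⟩ := not_nil_iff.mp hnil
  rw [support_cons, List.tail_cons]
  rw [support_cons] at hx
  rcases List.mem_cons.mp hx with rfl | h
  · exact q.end_mem_support
  · exact h

private lemma length_rotate' [DecidableEq V] {a u : V} (c : G.Walk a a) (h : u ∈ c.support) :
    (c.rotate u h).length = c.length := by
  have h1 := (rotate_darts c u h).perm.length_eq
  rwa [length_darts, length_darts] at h1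

private lemma mem_support_rotate_iff [DecidableEq V] {a u x : V} (c : G.Walk a a) (hnil : ¬ c.Nil)
    (h : u ∈ c.support) : x ∈ (c.rotate u h).support ↔ x ∈ c.support := by
  have hnil' : ¬ (c.rotate u h).Nil := by
    rw [nil_iff_length_eq, length_rotate']
    rwa [nil_iff_length_eq] at hnil
  constructor
  · intro hx
    exact List.mem_of_mem_tail ((support_rotate c u h).mem_iff.mp
      (mem_tail_of_closed _ hnil' hx))
  · intro hx
    exact List.mem_of_mem_tail ((support_rotate c u h).mem_iff.mpr
      (mem_tail_of_closed _ hnil hx))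

private lemma no_three_adj_center [DecidableEq V] {v x y z : V} (c : G.Walk v v)
    (hc : c.IsCycle) (hgl : c.length = G.girth)
    (hvx : G.Adj v x) (hvy : G.Adj v y) (hvz : G.Adj v z)
    (hxy : x ≠ y) (hxz : x ≠ z) (hyz : y ≠ z)
    (hx : x ∈ c.support) (hy : y ∈ c.support) (hz : z ∈ c.support) : False := by
  have hg3 : 3 ≤ G.girth := three_le_girth (fun hA => hA c hc)
  obtain ⟨s, hadj, q, rfl⟩ := not_nil_iff.mp hc.not_nil
  have hq : q.IsPath := ((cons_isCycle_iff q hadj).mp hc).1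
  have hx' : x ∈ q.support := by
    rw [support_cons] at hx
    rcases List.mem_cons.mp hx with rfl | h
    · exact absurd rfl hvx.ne
    · exact h
  have hy' : y ∈ q.support := by
    rw [support_cons] at hy
    rcases List.mem_cons.mp hy with rfl | h
    · exact absurd rfl hvy.ne
    · exact h
  have hz' : z ∈ q.support := by
    rw [support_cons] at hz
    rcases List.mem_cons.mp hz with rfl | h
    · exact absurd rfl hvz.ne
    · exact h
  have hclen : q.length + 1 = G.girth := by
    rw [← hgl, length_cons]
  have hqnil : ¬ q.reverse.Nil := by
    rw [nil_iff_length_eq, length_reverse]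
    omega
  obtain ⟨t, hadj2, p, hpe⟩ := not_nil_iff.mp hqnil
  have hrp : q.reverse.IsPath := hq.reverse
  rw [hpe, cons_isPath_iff] at hrp
  have hxp : x ∈ p.support := by
    have h1 : x ∈ q.reverse.support := by
      rw [support_reverse]; exact List.mem_reverse.mpr hx'
    rw [hpe, support_cons] at h1
    rcases List.mem_cons.mp h1 with rfl | h
    · exact absurd rfl hvx.ne
    · exact h
  have hyp : y ∈ p.support := by
    have h1 : y ∈ q.reverse.support := by
      rw [support_reverse]; exact List.mem_reverse.mpr hy'
    rw [hpe, support_cons] at h1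
    rcases List.mem_cons.mp h1 with rfl | h
    · exact absurd rfl hvy.ne
    · exact h
  have hzp : z ∈ p.support := by
    have h1 : z ∈ q.reverse.support := by
      rw [support_reverse]; exact List.mem_reverse.mpr hz'
    rw [hpe, support_cons] at h1
    rcases List.mem_cons.mp h1 with rfl | h
    · exact absurd rfl hvz.ne
    · exact h
  have hmain := three_nbrs hvx hvy hvz hxy hxz hyz p hrp.1 hrp.2 hxp hyp hzp
  have hpl : p.length + 1 = q.length := by
    have h2 := congr_arg Walk.length hpe
    rw [length_reverse, length_cons] at h2
    omega
  omega

end Aux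

/-- Let `G` be a graph with a cycle such that not every three (distinct) vertices have a
common neighbor. Then `L_{2,t}(G) ≥ g(G)`. -/
theorem L2t_ge_girth {V : Type*} [Fintype V] (G : SimpleGraph V)
    (hcyc : ¬ G.IsAcyclic)
    (hΛ : ¬ ∀ a b c : V, a ≠ b → a ≠ c → b ≠ c →
      ∃ w : V, G.Adj w a ∧ G.Adj w b ∧ G.Adj w c) :
    G.girth ≤ L2t G := by
  classical
  obtain ⟨a, c, hc, hgl⟩ := exists_girth_eq_length.mpr hcyc
  have hg3 : 3 ≤ G.girth := three_le_girth hcyc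
  have hbdd : BddAbove {n | ∃ B : Set V, IsTotalLimitedPacking G 2 B ∧ B.ncard = n} := by
    refine ⟨Fintype.card V, ?_⟩
    rintro n ⟨B, -, rfl⟩
    have := Set.ncard_le_ncard (Set.subset_univ B) Set.finite_univ
    simpa [Set.ncard_univ, Nat.card_eq_fintype_card] using this
  suffices h : ∃ B : Set V, IsTotalLimitedPacking G 2 B ∧ G.girth ≤ B.ncard by
    obtain ⟨B, hB, hBg⟩ := h
    exact hBg.trans (le_csSup hbdd ⟨B, hB, rfl⟩)
  by_cases hG3 : G.girth = 3
  · push_neg at hΛ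
    obtain ⟨p, q, r, hpq, hpr, hqr, hno⟩ := hΛ
    have hcard : ({p, q, r} : Set V).ncard = 3 :=
      Set.ncard_eq_three.mpr ⟨p, q, r, hpq, hpr, hqr, rfl⟩
    refine ⟨{p, q, r}, ?_, by rw [hG3, hcard]⟩
    intro v
    by_contra hcon
    push_neg at hcon
    have heq : ({p, q, r} : Set V) ∩ G.neighborSet v = {p, q, r} :=
      Set.eq_of_subset_of_ncard_le Set.inter_subset_left (by omega) (Set.toFinite _)
    have hsub : ({p, q, r} : Set V) ⊆ G.neighborSet v := by
      intro t ht
      have h1 : t ∈ ({p, q, r} : Set V) ∩ G.neighborSet v := by rw [heq]; exact ht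
      exact h1.2
    exact hno v (hsub (by simp)) (hsub (by simp)) (hsub (by simp))
  · have hg4 : 4 ≤ G.girth := by omega
    refine ⟨{w | w ∈ c.support}, ?_, ?_⟩
    · intro v
      by_contra hcon
      push_neg at hcon
      obtain ⟨t, hts, ht3⟩ := Set.exists_subset_card_eq
        (show 3 ≤ ({w | w ∈ c.support} ∩ G.neighborSet v).ncard by omega)
      obtain ⟨x, y, z, hxy, hxz, hyz, rfl⟩ := Set.ncard_eq_three.mp ht3
      obtain ⟨hxs, hxv⟩ := hts (Set.mem_insert _ _)
      obtain ⟨hys, hyv⟩ := hts (Set.mem_insert_of_mem _ (Set.mem_insert _ _))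
      obtain ⟨hzs, hzv⟩ := hts (Set.mem_insert_of_mem _ (Set.mem_insert_of_mem _ rfl))
      rw [Set.mem_setOf_eq] at hxs hys hzs
      rw [mem_neighborSet] at hxv hyv hzv
      by_cases hvB : v ∈ c.support
      · exact no_three_adj_center (c.rotate v hvB) (hc.rotate hvB)
          ((length_rotate' c hvB).trans hgl.symm) hxv hyv hzv hxy hxz hyz
          ((mem_support_rotate_iff c hc.not_nil hvB).mpr hxs)
          ((mem_support_rotate_iff c hc.not_nil hvB).mpr hys)
          ((mem_support_rotate_iff c hc.not_nil hvB).mpr hzs)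
      · have hc2 := hc.rotate hxs
        obtain ⟨s, hadj, q, hce⟩ := not_nil_iff.mp hc2.not_nil
        have hq : q.IsPath := ((cons_isCycle_iff q hadj).mp (hce ▸ hc2)).1
        have hyq : y ∈ q.support := by
          have h1 : y ∈ (c.rotate x hxs).support :=
            (mem_support_rotate_iff c hc.not_nil hxs).mpr hys
          rw [hce, support_cons] at h1
          rcases List.mem_cons.mp h1 with rfl | h
          · exact absurd rfl hxy
          · exact h
        have hzq : z ∈ q.support := by
          have h1 : z ∈ (c.rotate x hxs).support :=
            (mem_support_rotate_iff c hc.not_nil hxs).mpr hzs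
          rw [hce, support_cons] at h1
          rcases List.mem_cons.mp h1 with rfl | h
          · exact absurd rfl hxz
          · exact h
        have hxq : x ∈ q.support := q.end_mem_support
        have hvq : v ∉ q.support := by
          intro hm
          apply hvB
          refine (mem_support_rotate_iff c hc.not_nil hxs).mp ?_
          rw [hce, support_cons]
          exact List.mem_cons_of_mem _ hm
        have hmain := three_nbrs hxv hyv hzv hxy hxz hyz q hq hvq hxq hyq hzq
        have hql : q.length + 1 = G.girth := by
          have h2 := congr_arg Walk.length hce
          rw [length_rotate', length_cons] at h2
          omega
        omega
    · obtain ⟨s, hadj, q, hce⟩ := not_nil_iff.mp hc.not_nil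
      have hqp : q.IsPath := ((cons_isCycle_iff q hadj).mp (hce ▸ hc)).1
      rw [hce]
      have hset : {w | w ∈ (Walk.cons hadj q).support} = ↑q.support.toFinset := by
        ext t
        simp only [Set.mem_setOf_eq, support_cons, List.mem_cons, Finset.coe_sort_coe, Finset.mem_coe,
          List.mem_toFinset]
        constructor
        · rintro (rfl | h)
          · exact q.end_mem_support
          · exact h
        · exact fun h => Or.inr h
      rw [hset, Set.ncard_coe_finset, List.toFinset_card_of_nodup hqp.support_nodup,
        length_support, hgl, hce, length_cons]
end

section
/- The vertex set of a shortest cycle in a graph G with girth at least 4 is a set S such that every vertex of G has at most two neighbors in S; in particular, S is a 2-total limited packing of G of size g(G). -/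
open SimpleGraph

namespace ShortestCycleAux

open SimpleGraph.Walk

variable {V : Type*} {G : SimpleGraph V}

private lemma girth_le_of_cycle {v : V} {w : G.Walk v v} (hw : w.IsCycle) :
    G.girth ≤ w.length := by
  have h : G.egirth ≤ (w.length : ℕ∞) := by
    apply iInf_le_of_le v
    apply iInf_le_of_le w
    exact iInf_le _ hw
  have := ENat.toNat_le_toNat h (by simp)
  simpa [SimpleGraph.girth] using this

private lemma two_le_length_of_interior {a b u : V} {w : G.Walk a b}
    (hu : u ∈ w.support) (ha : u ≠ a) (hb : u ≠ b) : 2 ≤ w.length := by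
  match w with
  | .nil =>
    simp only [support_nil, List.mem_singleton] at hu
    exact absurd hu ha
  | .cons h .nil =>
    simp only [support_cons, support_nil, List.mem_cons, List.mem_singleton] at hu
    rcases hu with h1 | h1 | h1
    · exact absurd h1 ha
    · exact absurd h1 hb
    · exact absurd h1 (by simp)
  | .cons _ (.cons _ _) =>
    simp only [length_cons]
    omega

private lemma girth_le_chord {u a b : V} (hua : G.Adj u a) (hub : G.Adj u b)
    (hab : a ≠ b) (r : G.Walk a b) (hr : r.IsPath) (hur : u ∉ r.support) :
    G.girth ≤ r.length + 2 := by
  have hcyc : (Walk.cons hua (r.concat hub.symm)).IsCycle := by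
    rw [cons_isCycle_iff]
    constructor
    · rw [isPath_def, support_concat, List.nodup_append]
      refine ⟨hr.support_nodup, List.nodup_singleton u, ?_⟩
      intro t ht s htu
      simp only [List.mem_singleton] at htu
      subst htu
      exact fun h => hur (h ▸ ht)
    · intro hmem
      rw [edges_concat, List.concat_eq_append, List.mem_append] at hmem
      rcases hmem with h1 | h2
      · exact hur (r.fst_mem_support_of_mem_edges h1)
      · simp only [List.mem_singleton, Sym2.eq_iff] at h2
        rcases h2 with ⟨h3, h4⟩ | ⟨h3, h4⟩
        · exact hub.ne h3
        · exact hab h4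
  have h := girth_le_of_cycle hcyc
  simpa [length_concat] using h

private lemma cycle_split [DecidableEq V] {x y : V} {c : G.Walk x x} (hc : c.IsCycle)
    (hy : y ∈ c.support) (hxy : y ≠ x) :
    ∃ (p : G.Walk x y) (q : G.Walk y x), p.IsPath ∧ q.IsPath ∧
      p.length + q.length = c.length ∧
      (∀ w, w ∈ c.support ↔ w ∈ p.support ∨ w ∈ q.support) ∧
      (∀ w, w ∈ p.support → w ∈ q.support → w = x ∨ w = y) := by
  set p := c.takeUntil y hy with hpdef
  set q := c.dropUntil y hy with hqdef
  have hspec : p.append q = c := c.take_spec hy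
  have hsupp : c.support = p.support ++ q.support.tail := by
    rw [← hspec, support_append]
  have hps : p.support = x :: p.support.tail := p.support_eq_cons
  have hqs : q.support = y :: q.support.tail := q.support_eq_cons
  have htail : c.support.tail = p.support.tail ++ q.support.tail := by
    have h1 : c.support = x :: (p.support.tail ++ q.support.tail) := by
      rw [hsupp]
      conv_lhs => rw [hps]
      rfl
    rw [h1, List.tail_cons]
  have hnd : (p.support.tail ++ q.support.tail).Nodup := htail ▸ hc.support_nodup
  rw [List.nodup_append] at hnd
  obtain ⟨hnp, hnq, hdisj⟩ := hnd
  have hyp : y ∈ p.support.tail := by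
    have h2 : y ∈ p.support := p.end_mem_support
    rw [hps, List.mem_cons] at h2
    rcases h2 with h2 | h2
    · exact absurd h2 hxy
    · exact h2
  have hxq : x ∈ q.support.tail := by
    have h2 : x ∈ q.support := q.end_mem_support
    rw [hqs, List.mem_cons] at h2
    rcases h2 with h2 | h2
    · exact absurd h2.symm hxy
    · exact h2
  have hpp : p.IsPath := by
    rw [isPath_def, hps, List.nodup_cons]
    exact ⟨fun hx => hdisj _ hx _ hxq rfl, hnp⟩
  have hqq : q.IsPath := by
    rw [isPath_def, hqs, List.nodup_cons]
    exact ⟨fun hy' => hdisj _ hyp _ hy' rfl, hnq⟩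
  refine ⟨p, q, hpp, hqq, ?_, ?_, ?_⟩
  · rw [← hspec, length_append]
  · intro w
    rw [← hspec, mem_support_append_iff]
  · intro w hwp hwq
    rw [hps, List.mem_cons] at hwp
    rw [hqs, List.mem_cons] at hwq
    rcases hwp with rfl | hwp
    · exact Or.inl rfl
    rcases hwq with rfl | hwq
    · exact Or.inr rfl
    exact absurd rfl (hdisj _ hwp _ hwq)

private lemma path_split [DecidableEq V] {x y z : V} {p : G.Walk x y} (hp : p.IsPath)
    (hz : z ∈ p.support) :
    ∃ (p₁ : G.Walk x z) (p₂ : G.Walk z y), p₁.IsPath ∧ p₂.IsPath ∧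
      p₁.length + p₂.length = p.length ∧
      (∀ w, w ∈ p.support ↔ w ∈ p₁.support ∨ w ∈ p₂.support) ∧
      (∀ w, w ∈ p₁.support → w ∈ p₂.support → w = z) := by
  refine ⟨p.takeUntil z hz, p.dropUntil z hz, hp.takeUntil hz, hp.dropUntil hz, ?_, ?_, ?_⟩
  · have h := congrArg Walk.length (p.take_spec hz)
    rwa [length_append] at h
  · intro w
    conv_lhs => rw [← p.take_spec hz]
    exact mem_support_append_iff _ _
  · have hsupp : p.support = (p.takeUntil z hz).support ++ (p.dropUntil z hz).support.tail := by
      conv_lhs => rw [← p.take_spec hz]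
      rw [support_append]
    have hnd := hp.support_nodup
    rw [hsupp, List.nodup_append] at hnd
    intro w hw1 hw2
    rw [(p.dropUntil z hz).support_eq_cons, List.mem_cons] at hw2
    rcases hw2 with rfl | hw2
    · rfl
    · exact absurd rfl (hnd.2.2 _ hw1 _ hw2)

private lemma no_three {u x y z : V} (hg4 : 4 ≤ G.girth)
    (hux : G.Adj u x) (huy : G.Adj u y) (huz : G.Adj u z)
    (hxy : x ≠ y) (hyz : y ≠ z) (hzx : z ≠ x)
    (r₁ : G.Walk x y) (r₂ : G.Walk y z) (r₃ : G.Walk z x)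
    (h₁ : r₁.IsPath) (h₂ : r₂.IsPath) (h₃ : r₃.IsPath)
    (hsum : r₁.length + r₂.length + r₃.length = G.girth)
    (h12 : ¬(u ∈ r₁.support ∧ u ∈ r₂.support))
    (h23 : ¬(u ∈ r₂.support ∧ u ∈ r₃.support))
    (h31 : ¬(u ∈ r₃.support ∧ u ∈ r₁.support)) : False := by
  have key : ∀ {a b : V} (r : G.Walk a b), r.IsPath → G.Adj u a → G.Adj u b → a ≠ b →
      (u ∈ r.support → 2 ≤ r.length) ∧ (u ∉ r.support → G.girth ≤ r.length + 2) := by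
    intro a b r hr hua hub hab
    exact ⟨fun hu => two_le_length_of_interior hu hua.ne hub.ne,
      fun hu => girth_le_chord hua hub hab r hr hu⟩
  obtain ⟨k1a, k1b⟩ := key r₁ h₁ hux huy hxy
  obtain ⟨k2a, k2b⟩ := key r₂ h₂ huy huz hyz
  obtain ⟨k3a, k3b⟩ := key r₃ h₃ huz hux hzx
  by_cases e1 : u ∈ r₁.support
  · have b1 := k1a e1
    have b2 := k2b (fun h => h12 ⟨e1, h⟩)
    have b3 := k3b (fun h => h31 ⟨h, e1⟩)
    omega
  · have b1 := k1b e1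
    by_cases e2 : u ∈ r₂.support
    · have b2 := k2a e2
      have b3 := k3b (fun h => h23 ⟨e2, h⟩)
      omega
    · have b2 := k2b e2
      by_cases e3 : u ∈ r₃.support
      · have b3 := k3a e3
        omega
      · have b3 := k3b e3
        omega

end ShortestCycleAux

open ShortestCycleAux SimpleGraph.Walk in
/-- The vertex set `S` of a shortest cycle in a graph of girth at least `4` satisfies:
every vertex of `G` has at most two neighbors in `S`; in particular `S` is a `2`-total
limited packing of size `g(G)`. -/
theorem shortest_cycle_is_2TLP {V : Type*} [Fintype V] (G : SimpleGraph V)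
    {v : V} (c : G.Walk v v) (hc : c.IsCycle) (hlen : c.length = G.girth)
    (hg : 4 ≤ G.girth) :
    (∀ u : V, ({x : V | x ∈ c.support} ∩ G.neighborSet u).ncard ≤ 2) ∧
      IsTotalLimitedPacking G 2 {x : V | x ∈ c.support} ∧
      ({x : V | x ∈ c.support} : Set V).ncard = G.girth := by
  classical
  have claim2 : ({x : V | x ∈ c.support} : Set V).ncard = G.girth := by
    cases c with
    | nil =>
      have h3 := hc.three_le_length
      simp only [Walk.length_nil] at h3
      omega
    | cons h w =>
      have hnd : w.support.Nodup := by simpa using hc.support_nodup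
      have hvw : v ∈ w.support := w.end_mem_support
      have hset : {x : V | x ∈ (Walk.cons h w).support} = ↑w.support.toFinset := by
        ext t
        simp only [Set.mem_setOf_eq, Walk.support_cons, List.mem_cons, Finset.coe_sort_coe,
          Finset.mem_coe, List.mem_toFinset]
        constructor
        · rintro (rfl | ht)
          · exact hvw
          · exact ht
        · exact Or.inr
      rw [hset, Set.ncard_coe_finset, List.toFinset_card_of_nodup hnd, ← hlen]
      rw [Walk.length_cons]
      have := w.length_support
      omega
  have claim1 : ∀ u : V, ({x : V | x ∈ c.support} ∩ G.neighborSet u).ncard ≤ 2 := by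
    intro u
    by_contra hcon
    push_neg at hcon
    obtain ⟨T, hTsub, hT3⟩ := Set.exists_subset_card_eq (show 3 ≤ _ from hcon)
    rw [Set.ncard_eq_three] at hT3
    obtain ⟨x, y, z, hxy, hxz, hyz, rfl⟩ := hT3
    obtain ⟨hxs, hxn⟩ := hTsub (show x ∈ ({x, y, z} : Set V) by simp)
    obtain ⟨hys, hyn⟩ := hTsub (show y ∈ ({x, y, z} : Set V) by simp)
    obtain ⟨hzs, hzn⟩ := hTsub (show z ∈ ({x, y, z} : Set V) by simp)
    have hux : G.Adj u x := hxn
    have huy : G.Adj u y := hyn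
    have huz : G.Adj u z := hzn
    -- rotate the cycle to start at x
    have hxc : x ∈ c.support := hxs
    have hc₂ : (c.rotate x hxc).IsCycle := hc.rotate hxc
    have hlen₂ : (c.rotate x hxc).length = G.girth := by
      have h1 : (c.rotate x hxc).length =
          (c.dropUntil x hxc).length + (c.takeUntil x hxc).length := by
        simp only [Walk.rotate, Walk.length_append]
      have h2 := congrArg Walk.length (c.take_spec hxc)
      rw [Walk.length_append] at h2
      omega
    have hmem₂ : ∀ w, w ∈ (c.rotate x hxc).support ↔ w ∈ c.support := by
      intro w
      simp only [Walk.rotate, Walk.mem_support_append_iff]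
      conv_rhs => rw [← c.take_spec hxc]
      rw [Walk.mem_support_append_iff]
      tauto
    have hy₂ : y ∈ (c.rotate x hxc).support := (hmem₂ y).mpr hys
    obtain ⟨p, q, hpP, hqP, hpq, hpqmem, hpqint⟩ :=
      cycle_split hc₂ hy₂ (Ne.symm hxy)
    have hz₂ : z ∈ (c.rotate x hxc).support := (hmem₂ z).mpr hzs
    rcases (hpqmem z).mp hz₂ with hzp | hzq
    · -- z on the arc from x to y
      obtain ⟨p₁, p₂, h1P, h2P, h12len, hmemp, hintp⟩ := path_split hpP hzp
      refine no_three hg hux huz huy hxz (Ne.symm hyz) (Ne.symm hxy) p₁ p₂ q h1P h2P hqP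
        ?_ ?_ ?_ ?_
      · rw [h12len, hpq, hlen₂]
      · rintro ⟨hu1, hu2⟩
        exact huz.ne (hintp u hu1 hu2)
      · rintro ⟨hu2, hu3⟩
        have hup : u ∈ p.support := (hmemp u).mpr (Or.inr hu2)
        rcases hpqint u hup hu3 with h | h
        · exact hux.ne h
        · exact huy.ne h
      · rintro ⟨hu3, hu1⟩
        have hup : u ∈ p.support := (hmemp u).mpr (Or.inl hu1)
        rcases hpqint u hup hu3 with h | h
        · exact hux.ne h
        · exact huy.ne h
    · -- z on the arc from y back to x
      obtain ⟨q₁, q₂, h1P, h2P, h12len, hmemq, hintq⟩ := path_split hqP hzq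
      refine no_three hg hux huy huz hxy hyz (Ne.symm hxz) p q₁ q₂ hpP h1P h2P
        ?_ ?_ ?_ ?_
      · omega
      · rintro ⟨hu1, hu2⟩
        have huq : u ∈ q.support := (hmemq u).mpr (Or.inl hu2)
        rcases hpqint u hu1 huq with h | h
        · exact hux.ne h
        · exact huy.ne h
      · rintro ⟨hu2, hu3⟩
        exact huz.ne (hintq u hu2 hu3)
      · rintro ⟨hu3, hu1⟩
        have huq : u ∈ q.support := (hmemq u).mpr (Or.inr hu3)
        rcases hpqint u hu1 huq with h | h
        · exact hux.ne h
        · exact huy.ne h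
  exact ⟨claim1, claim1, claim2⟩
end

section
/- For any graph G of order n ≥ 2 with maximum degree Δ(G), L_{2,t}(G) ≤ n − Δ(G) + 2. -/
open SimpleGraph

/-- For any graph `G` of order `n ≥ 2`, `L_{2,t}(G) ≤ n − Δ(G) + 2`. -/
theorem L2t_le {V : Type*} [Fintype V] (G : SimpleGraph V) [DecidableRel G.Adj]
    (hn : 2 ≤ Fintype.card V) :
    L2t G ≤ Fintype.card V - G.maxDegree + 2 := by
  have hne : Nonempty V := Fintype.card_pos_iff.mp (by omega)
  obtain ⟨v, hv⟩ := G.exists_maximal_degree_vertex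
  have hdlt : G.degree v < Fintype.card V := G.degree_lt_card_verts v
  apply csSup_le
  · exact ⟨0, ∅, fun w => by simp, by simp⟩
  rintro n ⟨B, hB, rfl⟩
  set S : Set V := insert v (G.neighborSet v) with hS
  have h1 : (B ∩ S).ncard ≤ 3 := by
    calc (B ∩ S).ncard ≤ (insert v (B ∩ G.neighborSet v)).ncard := by
          apply Set.ncard_le_ncard _ (Set.toFinite _)
          rintro x ⟨hxB, hx⟩
          rcases hx with rfl | h
          · exact Set.mem_insert _ _
          · exact Set.mem_insert_of_mem _ ⟨hxB, h⟩
      _ ≤ (B ∩ G.neighborSet v).ncard + 1 := Set.ncard_insert_le _ _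
      _ ≤ 3 := by have := hB v; omega
  have hScard : S.ncard = G.degree v + 1 := by
    rw [hS, Set.ncard_insert_of_notMem (by simp)]
    simp [Set.ncard_eq_toFinset_card', SimpleGraph.degree, SimpleGraph.neighborFinset]
  have h2 : (B \ S).ncard ≤ Fintype.card V - (G.degree v + 1) := by
    have hsub : B \ S ⊆ (Set.univ : Set V) \ S := fun x hx => ⟨trivial, hx.2⟩
    have h3 := Set.ncard_le_ncard hsub (Set.toFinite _)
    have hcard : ((Set.univ : Set V) \ S).ncard = Fintype.card V - (G.degree v + 1) := by
      rw [Set.ncard_diff (Set.subset_univ _), Set.ncard_univ, Nat.card_eq_fintype_card, hScard]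
    omega
  have hsplit : (B ∩ S).ncard + (B \ S).ncard = B.ncard :=
    Set.ncard_inter_add_ncard_diff_eq_ncard B S (Set.toFinite _)
  rw [hv]
  omega
end

section
/- For any graph G of order n, L_{2,t}(G) + L_{2,t}(Ḡ) ≤ n + 5, where Ḡ is the complement of G. -/
open SimpleGraph

lemma L2t_exists {V : Type*} [Fintype V] (G : SimpleGraph V) :
    ∃ B : Set V, IsTotalLimitedPacking G 2 B ∧ B.ncard = L2t G := by
  have hne : {n | ∃ B : Set V, IsTotalLimitedPacking G 2 B ∧ B.ncard = n}.Nonempty := by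
    refine ⟨0, ∅, ?_, by simp⟩
    intro v; simp [Set.ncard_empty]
  have hbdd : BddAbove {n | ∃ B : Set V, IsTotalLimitedPacking G 2 B ∧ B.ncard = n} := by
    refine ⟨Fintype.card V, ?_⟩
    rintro n ⟨B, -, rfl⟩
    simpa [Set.ncard_univ] using Set.ncard_le_ncard (Set.subset_univ B) (Set.finite_univ)
  have := Nat.sSup_mem hne hbdd
  exact this

/-- For any graph `G` of order `n`, `L_{2,t}(G) + L_{2,t}(Ġ) ≤ n + 5`. -/
theorem L2t_nordhaus_gaddum {V : Type*} [Fintype V] (G : SimpleGraph V) :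
    L2t G + L2t Gᶜ ≤ Fintype.card V + 5 := by
  obtain ⟨B, hB, hBcard⟩ := L2t_exists G
  obtain ⟨B', hB', hB'card⟩ := L2t_exists Gᶜ
  have hfin : B.Finite := Set.toFinite B
  have hfin' : B'.Finite := Set.toFinite B'
  have hinter : (B ∩ B').ncard ≤ 5 := by
    by_contra h
    push_neg at h
    have hne : (B ∩ B').Nonempty := by
      rw [← Set.ncard_pos (Set.toFinite _)]; omega
    obtain ⟨v, hv⟩ := hne
    have hsub : (B ∩ B') \ {v} ⊆ (B ∩ G.neighborSet v) ∪ (B' ∩ Gᶜ.neighborSet v) := by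
      rintro w ⟨⟨hwB, hwB'⟩, hwv⟩
      simp only [Set.mem_singleton_iff] at hwv
      by_cases hadj : G.Adj v w
      · exact Or.inl ⟨hwB, hadj⟩
      · exact Or.inr ⟨hwB', by simp [SimpleGraph.compl_adj, Ne.symm hwv, hadj]⟩
    have h1 : ((B ∩ B') \ {v}).ncard ≤ 4 := by
      calc ((B ∩ B') \ {v}).ncard
          ≤ ((B ∩ G.neighborSet v) ∪ (B' ∩ Gᶜ.neighborSet v)).ncard :=
            Set.ncard_le_ncard hsub (Set.toFinite _)
        _ ≤ (B ∩ G.neighborSet v).ncard + (B' ∩ Gᶜ.neighborSet v).ncard :=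
            Set.ncard_union_le _ _
        _ ≤ 2 + 2 := add_le_add (hB v) (hB' v)
        _ = 4 := rfl
    have h2 : ((B ∩ B') \ {v}).ncard = (B ∩ B').ncard - 1 := by
      rw [Set.ncard_diff_singleton_of_mem hv]
    omega
  have hunion : (B ∪ B').ncard ≤ Fintype.card V := by
    simpa [Set.ncard_univ] using Set.ncard_le_ncard (Set.subset_univ (B ∪ B')) Set.finite_univ
  have key : (B ∪ B').ncard + (B ∩ B').ncard = B.ncard + B'.ncard :=
    Set.ncard_union_add_ncard_inter B B' hfin hfin'
  omega
end

section
/- For any tree T of order n, L_{2,t}(T) − L₂(T) ≤ ⌊n/3⌋. -/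
open SimpleGraph

lemma tree_penult {V : Type*} {T : SimpleGraph V} (hT : T.IsTree) {r u c : V}
    (hadj : T.Adj u c) (hd : T.dist r c ≤ T.dist r u)
    (P : T.Walk r u) (hP : P.IsPath) : P.reverse.getVert 1 = c := by
  classical
  obtain ⟨p, hp, hlen⟩ := hT.isConnected.exists_path_of_dist r c
  by_cases hu : u ∈ p.support
  · exfalso
    have h1 : T.dist r u ≤ (p.takeUntil u hu).length := dist_le _
    have h2 : (p.takeUntil u hu).length + (p.dropUntil u hu).length = p.length := by
      have h := congrArg Walk.length (p.take_spec hu)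
      rw [Walk.length_append] at h
      exact h
    have h3 : 0 < (p.dropUntil u hu).length := by
      rcases Nat.eq_zero_or_pos (p.dropUntil u hu).length with h | h
      · exact absurd (Walk.eq_of_length_eq_zero h) hadj.ne
      · exact h
    omega
  · have hq : (p.concat hadj.symm).IsPath := by
      rw [← Walk.isPath_reverse_iff, Walk.reverse_concat]
      refine hp.reverse.cons ?_
      simpa [Walk.support_reverse] using hu
    have heq : (⟨P, hP⟩ : T.Path r u) = ⟨p.concat hadj.symm, hq⟩ :=
      hT.IsAcyclic.path_unique _ _
    have hPe : P = p.concat hadj.symm := congrArg Subtype.val heq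
    rw [hPe, Walk.reverse_concat]; exact (Walk.getVert_cons_succ (n := 0) _ _).trans (Walk.getVert_zero _)

lemma tree_unique_low_nbr {V : Type*} {T : SimpleGraph V} (hT : T.IsTree) {r u c₁ c₂ : V}
    (h1 : T.Adj u c₁) (h2 : T.Adj u c₂)
    (hd1 : T.dist r c₁ ≤ T.dist r u) (hd2 : T.dist r c₂ ≤ T.dist r u) : c₁ = c₂ := by
  obtain ⟨P, hP, -⟩ := hT.isConnected.exists_path_of_dist r u
  rw [← tree_penult hT h1 hd1 P hP, ← tree_penult hT h2 hd2 P hP]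

lemma tree_leaf {V : Type*} [Fintype V] [DecidableEq V] {T : SimpleGraph V}
    (hT : T.IsTree) (B : Finset V)
    (hedge : ∃ u ∈ B, ∃ w ∈ B, T.Adj u w) :
    ∃ u ∈ B, ∃ w ∈ B, T.Adj u w ∧ ∀ c ∈ B, T.Adj u c → c = w := by
  classical
  obtain ⟨u₀, hu₀, w₀, hw₀, hadj₀⟩ := hedge
  set W : Finset V := B.filter (fun v => ∃ w ∈ B, T.Adj v w) with hW
  have hWne : W.Nonempty := ⟨u₀, by simp [hW, hu₀]; exact ⟨w₀, hw₀, hadj₀⟩⟩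
  have hr : Nonempty V := ⟨u₀⟩
  obtain ⟨r⟩ := hr
  obtain ⟨u, huW, hmax⟩ := W.exists_max_image (fun v => T.dist r v) hWne
  rw [hW, Finset.mem_filter] at huW
  obtain ⟨huB, w, hwB, hadj⟩ := huW
  refine ⟨u, huB, w, hwB, hadj, fun c hcB hc => ?_⟩
  have hcW : T.dist r c ≤ T.dist r u := by
    apply hmax
    rw [hW, Finset.mem_filter]
    exact ⟨hcB, u, huB, hc.symm⟩
  have hwW : T.dist r w ≤ T.dist r u := by
    apply hmax
    rw [hW, Finset.mem_filter]
    exact ⟨hwB, u, huB, hadj.symm⟩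
  exact tree_unique_low_nbr hT hc hadj hcW hwW

lemma forest_prune {V : Type*} [Fintype V] [DecidableEq V] {T : SimpleGraph V}
    [DecidableRel T.Adj] (hT : T.IsTree) :
    ∀ n (B : Finset V), B.card ≤ n →
    (∀ v ∈ B, (B.filter (fun w => T.Adj v w)).card ≤ 2) →
    ∃ S ⊆ B, 3 * S.card ≤ B.card ∧
      ∀ v ∈ B \ S, ((B \ S).filter (fun w => T.Adj v w)).card ≤ 1 := by
  intro n
  induction n with
  | zero =>
    intro B hB _
    refine ⟨∅, Finset.empty_subset _, by simp, ?_⟩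
    have : B = ∅ := Finset.card_eq_zero.mp (Nat.le_zero.mp hB)
    simp [this]
  | succ n ih =>
    intro B hBcard hB2
    by_cases hedge : ∃ u ∈ B, ∃ w ∈ B, T.Adj u w
    · obtain ⟨u, huB, w, hwB, hadj, hu_only⟩ := tree_leaf hT B hedge
      have huw : u ≠ w := hadj.ne
      by_cases hex : ∃ x ∈ B, T.Adj w x ∧ x ≠ u
      · -- w has another neighbor x : remove x
        obtain ⟨x, hxB, hwx, hxu⟩ := hex
        have hxw : x ≠ w := fun h => (h ▸ hwx).ne rfl
        set B' : Finset V := B \ {u, w, x} with hB'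
        have hsub : ({u, w, x} : Finset V) ⊆ B := by
          intro c hc; simp at hc; rcases hc with h|h|h <;> subst h <;> assumption
        have hc3 : ({u, w, x} : Finset V).card = 3 := by
          rw [Finset.card_insert_of_notMem (by simp [huw, hxu.symm]),
            Finset.card_insert_of_notMem (by simp [hxw.symm]), Finset.card_singleton]
        have hB3 : 3 ≤ B.card := hc3 ▸ Finset.card_le_card hsub
        have hB'card : B'.card = B.card - 3 := by
          rw [hB', Finset.card_sdiff_of_subset hsub, hc3]
        have hB'2 : ∀ v ∈ B', (B'.filter (fun c => T.Adj v c)).card ≤ 2 := by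
          intro v hv
          exact le_trans (Finset.card_le_card (Finset.filter_subset_filter _
            (Finset.sdiff_subset))) (hB2 v (Finset.mem_sdiff.mp hv).1)
        obtain ⟨S', hS'B', h3, h1⟩ := ih B' (by omega) hB'2
        have hxS' : x ∉ S' := fun h => by
          have := Finset.mem_sdiff.mp (hS'B' h); simp [hB'] at this
        have hw_or : ∀ c ∈ B, T.Adj w c → c = u ∨ c = x := by
          intro c hc hadjc
          have hsub2 : ({u, x} : Finset V) ⊆ B.filter (fun c => T.Adj w c) := by
            intro d hd; simp at hd
            rcases hd with h|h <;> subst h <;> simp [huB, hxB, hadj.symm, hwx]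
          have hcard2 : ({u, x} : Finset V).card = 2 := by
            rw [Finset.card_insert_of_notMem (by simp [hxu.symm]), Finset.card_singleton]
          have := Finset.eq_of_subset_of_card_le hsub2 (le_trans (hB2 w hwB) (le_of_eq hcard2.symm))
          have hcmem : c ∈ ({u, x} : Finset V) := by
            rw [this]; simp [hc, hadjc]
          simpa using hcmem
        refine ⟨insert x S', ?_, ?_, ?_⟩
        · intro c hc
          rcases Finset.mem_insert.mp hc with h|h
          · exact h ▸ hxB
          · exact Finset.sdiff_subset (hS'B' h)
        · rw [Finset.card_insert_of_notMem hxS']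
          omega
        · intro v hv
          obtain ⟨hvB, hvS⟩ := Finset.mem_sdiff.mp hv
          have hvx : v ≠ x := fun h => hvS (h ▸ Finset.mem_insert_self x S')
          have hvS' : v ∉ S' := fun h => hvS (Finset.mem_insert_of_mem h)
          by_cases hvu : v = u
          · subst hvu
            have : (B \ insert x S').filter (fun c => T.Adj v c) ⊆ {w} := by
              intro c hc
              obtain ⟨hc1, hc2⟩ := Finset.mem_filter.mp hc
              have := hu_only c (Finset.mem_sdiff.mp hc1).1 hc2
              simp [this]
            exact le_trans (Finset.card_le_card this) (by simp)
          by_cases hvw : v = w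
          · subst hvw
            have : (B \ insert x S').filter (fun c => T.Adj v c) ⊆ {u} := by
              intro c hc
              obtain ⟨hc1, hc2⟩ := Finset.mem_filter.mp hc
              obtain ⟨hcB, hcS⟩ := Finset.mem_sdiff.mp hc1
              rcases hw_or c hcB hc2 with h|h
              · simp [h]
              · exact absurd (h ▸ Finset.mem_insert_self x S') hcS
            exact le_trans (Finset.card_le_card this) (by simp)
          · have hvB' : v ∈ B' \ S' := by
              rw [Finset.mem_sdiff, hB', Finset.mem_sdiff]
              exact ⟨⟨hvB, by simp [hvu, hvw, hvx]⟩, hvS'⟩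
            have hss : (B \ insert x S').filter (fun c => T.Adj v c) ⊆
                (B' \ S').filter (fun c => T.Adj v c) := by
              intro c hc
              obtain ⟨hc1, hc2⟩ := Finset.mem_filter.mp hc
              obtain ⟨hcB, hcS⟩ := Finset.mem_sdiff.mp hc1
              have hcx : c ≠ x := fun h => hcS (h ▸ Finset.mem_insert_self x S')
              have hcu : c ≠ u := by
                intro h; subst h
                exact hvw (hu_only v hvB hc2.symm)
              have hcw : c ≠ w := by
                intro h; subst h
                rcases hw_or v hvB hc2.symm with h'|h'
                · exact hvu h'
                · exact hvx h'
              rw [Finset.mem_filter, Finset.mem_sdiff, hB', Finset.mem_sdiff]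
              exact ⟨⟨⟨hcB, by simp [hcu, hcw, hcx]⟩,
                fun h => hcS (Finset.mem_insert_of_mem h)⟩, hc2⟩
            exact le_trans (Finset.card_le_card hss) (h1 v hvB')
      · -- u is w's only neighbor in B
        push_neg at hex
        have hw_only : ∀ c ∈ B, T.Adj w c → c = u := fun c hc h => hex c hc h
        set B' : Finset V := B \ {u, w} with hB'
        have hsub : ({u, w} : Finset V) ⊆ B := by
          intro c hc; simp at hc; rcases hc with h|h <;> subst h <;> assumption
        have hc2' : ({u, w} : Finset V).card = 2 := by
          rw [Finset.card_insert_of_notMem (by simp [huw]), Finset.card_singleton]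
        have hB2' : 2 ≤ B.card := hc2' ▸ Finset.card_le_card hsub
        have hB'card : B'.card = B.card - 2 := by
          rw [hB', Finset.card_sdiff_of_subset hsub, hc2']
        have hB'2 : ∀ v ∈ B', (B'.filter (fun c => T.Adj v c)).card ≤ 2 := by
          intro v hv
          exact le_trans (Finset.card_le_card (Finset.filter_subset_filter _
            (Finset.sdiff_subset))) (hB2 v (Finset.mem_sdiff.mp hv).1)
        obtain ⟨S', hS'B', h3, h1⟩ := ih B' (by omega) hB'2
        refine ⟨S', fun c hc => Finset.sdiff_subset (hS'B' hc), by omega, ?_⟩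
        intro v hv
        obtain ⟨hvB, hvS'⟩ := Finset.mem_sdiff.mp hv
        by_cases hvu : v = u
        · subst hvu
          have : (B \ S').filter (fun c => T.Adj v c) ⊆ {w} := by
            intro c hc
            obtain ⟨hc1, hc2⟩ := Finset.mem_filter.mp hc
            simp [hu_only c (Finset.mem_sdiff.mp hc1).1 hc2]
          exact le_trans (Finset.card_le_card this) (by simp)
        by_cases hvw : v = w
        · subst hvw
          have : (B \ S').filter (fun c => T.Adj v c) ⊆ {u} := by
            intro c hc
            obtain ⟨hc1, hc2⟩ := Finset.mem_filter.mp hc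
            simp [hw_only c (Finset.mem_sdiff.mp hc1).1 hc2]
          exact le_trans (Finset.card_le_card this) (by simp)
        · have hvB' : v ∈ B' \ S' := by
            rw [Finset.mem_sdiff, hB', Finset.mem_sdiff]
            exact ⟨⟨hvB, by simp [hvu, hvw]⟩, hvS'⟩
          have hss : (B \ S').filter (fun c => T.Adj v c) ⊆
              (B' \ S').filter (fun c => T.Adj v c) := by
            intro c hc
            obtain ⟨hc1, hc2⟩ := Finset.mem_filter.mp hc
            obtain ⟨hcB, hcS⟩ := Finset.mem_sdiff.mp hc1
            have hcu : c ≠ u := by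
              intro h; subst h
              exact hvw (hu_only v hvB hc2.symm)
            have hcw : c ≠ w := by
              intro h; subst h
              exact hvu (hw_only v hvB hc2.symm)
            rw [Finset.mem_filter, Finset.mem_sdiff, hB', Finset.mem_sdiff]
            exact ⟨⟨⟨hcB, by simp [hcu, hcw]⟩, hcS⟩, hc2⟩
          exact le_trans (Finset.card_le_card hss) (h1 v hvB')
    · -- no edges inside B
      push_neg at hedge
      refine ⟨∅, Finset.empty_subset _, by simp, ?_⟩
      intro v hv
      rw [Finset.sdiff_empty] at hv ⊢
      have : B.filter (fun c => T.Adj v c) = ∅ := by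
        apply Finset.filter_false_of_mem
        intro c hc
        exact hedge v hv c hc
      simp [this]

/-- For any tree `T` of order `n`, `L_{2,t}(T) − L₂(T) ≤ ⌊n/3⌋`. -/
theorem L2t_sub_L2_le_of_tree {V : Type*} [Fintype V] (T : SimpleGraph V)
    (hT : T.IsTree) :
    L2t T - L2 T ≤ Fintype.card V / 3 := by
  classical
  rw [Nat.sub_le_iff_le_add]
  apply csSup_le
  · exact ⟨0, ∅, fun v => by simp, by simp⟩
  rintro m ⟨B, hB, rfl⟩
  set Bf : Finset V := (Set.toFinite B).toFinset with hBf
  have hcoeB : (↑Bf : Set V) = B := Set.Finite.coe_toFinset _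
  have hcard_eq : B.ncard = Bf.card := by
    rw [← hcoeB, Set.ncard_coe_finset]
  have hfilter : ∀ (C : Finset V) (v : V),
      ((C.filter (fun w => T.Adj v w)).card : ℕ) = ((↑C : Set V) ∩ T.neighborSet v).ncard := by
    intro C v
    rw [← Set.ncard_coe_finset]
    congr 1
    ext x
    simp [mem_neighborSet]
  have hB2 : ∀ v ∈ Bf, (Bf.filter (fun w => T.Adj v w)).card ≤ 2 := by
    intro v _
    rw [hfilter, hcoeB]
    exact hB v
  obtain ⟨S, hSB, h3, h1⟩ := forest_prune hT Bf.card Bf le_rfl hB2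
  set B' : Set V := ↑(Bf \ S) with hB'
  have hB'sub : B' ⊆ B := by
    rw [hB', ← hcoeB]
    exact_mod_cast Finset.sdiff_subset
  have hpack : IsLimitedPacking T 2 B' := by
    intro v
    have hsub1 : B' ∩ closedNbhd T v ⊆ insert v (B' ∩ T.neighborSet v) := by
      intro x hx
      obtain ⟨hx1, hx2⟩ := hx
      rcases hx2 with h | h
      · exact Or.inl h
      · exact Or.inr ⟨hx1, h⟩
    by_cases hv : v ∈ Bf \ S
    · have hn : (B' ∩ T.neighborSet v).ncard ≤ 1 := by
        rw [← hfilter]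
        exact h1 v hv
      calc (B' ∩ closedNbhd T v).ncard
          ≤ (insert v (B' ∩ T.neighborSet v)).ncard :=
            Set.ncard_le_ncard hsub1 (Set.toFinite _)
        _ ≤ (B' ∩ T.neighborSet v).ncard + 1 := Set.ncard_insert_le _ _
        _ ≤ 2 := by omega
    · have hvB' : v ∉ B' := by
        rw [hB']; exact_mod_cast hv
      have heq : B' ∩ closedNbhd T v = B' ∩ T.neighborSet v := by
        ext x
        constructor
        · rintro ⟨hx1, hx2⟩
          rcases hx2 with h | h
          · exact absurd (h ▸ hx1) hvB'
          · exact ⟨hx1, h⟩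
        · rintro ⟨hx1, hx2⟩
          exact ⟨hx1, Or.inr hx2⟩
      rw [heq]
      calc (B' ∩ T.neighborSet v).ncard
          ≤ (B ∩ T.neighborSet v).ncard :=
            Set.ncard_le_ncard (Set.inter_subset_inter_left _ hB'sub) (Set.toFinite _)
        _ ≤ 2 := hB v
  have hbdd : BddAbove {n | ∃ B : Set V, IsLimitedPacking T 2 B ∧ B.ncard = n} := by
    refine ⟨Fintype.card V, ?_⟩
    rintro m ⟨C, _, rfl⟩
    calc C.ncard ≤ (Set.univ : Set V).ncard :=
          Set.ncard_le_ncard (Set.subset_univ _) (Set.toFinite _)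
      _ = Fintype.card V := by rw [Set.ncard_univ, Nat.card_eq_fintype_card]
  have hL2 : (Bf \ S).card ≤ L2 T := by
    apply le_csSup hbdd
    exact ⟨B', hpack, by rw [hB', Set.ncard_coe_finset]⟩
  have hsplit : (Bf \ S).card + S.card = Bf.card := Finset.card_sdiff_add_card_eq_card hSB
  have hScard : S.card ≤ Fintype.card V / 3 := by
    rw [Nat.le_div_iff_mul_le (by norm_num)]
    have : Bf.card ≤ Fintype.card V := Finset.card_le_univ Bf
    omega
  omega
end

section
/- Let G be the graph obtained from a graph F by attaching a pendant vertex to every vertex of F (the corona F ⊙ K₁). Then L_{2,t}(G) = ρₒ(F) + |V(F)|, where ρₒ(F) is the open packing number of F. -/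
open SimpleGraph

/-- The corona `F ⊙ K₁`: attach a pendant vertex (`Sum.inr v`) to every vertex
(`Sum.inl v`) of `F`. -/
def corona {V : Type*} (F : SimpleGraph V) : SimpleGraph (V ⊕ V) where
  Adj x y := match x, y with
    | .inl a, .inl b => F.Adj a b
    | .inl a, .inr b => a = b
    | .inr a, .inl b => a = b
    | .inr _, .inr _ => False
  symm := by
    constructor
    rintro (a | a) (b | b) h
    · exact F.adj_symm h
    · exact h.symm
    · exact h.symm
    · exact h
  loopless := by
    constructor
    rintro (a | a) h
    · exact F.irrefl h
    · exact h

/-- An open packing: pairwise disjoint open neighborhoods. -/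
def IsOpenPacking {V : Type*} (G : SimpleGraph V) (P : Set V) : Prop :=
  ∀ u ∈ P, ∀ v ∈ P, u ≠ v → G.neighborSet u ∩ G.neighborSet v = ∅

/-- The open packing number `ρₒ(G)`. -/
noncomputable def openPackingNumber {V : Type*} (G : SimpleGraph V) : ℕ :=
  sSup {n | ∃ P : Set V, IsOpenPacking G P ∧ P.ncard = n}

section Aux

variable {V : Type*} (F : SimpleGraph V)

@[simp] lemma corona_adj_inl_inl (a b : V) :
    (corona F).Adj (.inl a) (.inl b) ↔ F.Adj a b := Iff.rfl
@[simp] lemma corona_adj_inl_inr (a b : V) :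
    (corona F).Adj (.inl a) (.inr b) ↔ a = b := Iff.rfl
@[simp] lemma corona_adj_inr_inl (a b : V) :
    (corona F).Adj (.inr a) (.inl b) ↔ a = b := Iff.rfl
@[simp] lemma corona_adj_inr_inr (a b : V) :
    ¬ (corona F).Adj (.inr a) (.inr b) := fun h => h

lemma corona_nbhd_inl (v : V) :
    (corona F).neighborSet (Sum.inl v) = Sum.inl '' (F.neighborSet v) ∪ {Sum.inr v} := by
  ext (b | b) <;> simp [SimpleGraph.mem_neighborSet, eq_comm]

lemma corona_nbhd_inr (v : V) :
    (corona F).neighborSet (Sum.inr v) = {Sum.inl v} := by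
  ext (b | b) <;> simp [SimpleGraph.mem_neighborSet, eq_comm]

end Aux

/-- For the corona `G = F ⊙ K₁`, `L_{2,t}(G) = ρₒ(F) + |V(F)|`. -/
theorem L2t_corona {V : Type*} [Fintype V] (F : SimpleGraph V) :
    L2t (corona F) = openPackingNumber F + Fintype.card V := by
  classical
  set SP : Set ℕ := {n | ∃ P : Set V, IsOpenPacking F P ∧ P.ncard = n} with hSP
  set SL : Set ℕ := {n | ∃ B : Set (V ⊕ V), IsTotalLimitedPacking (corona F) 2 B ∧ B.ncard = n}
    with hSL
  have hSPbdd : BddAbove SP := by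
    refine ⟨Fintype.card V, ?_⟩
    rintro n ⟨P, -, rfl⟩
    calc P.ncard ≤ (Set.univ : Set V).ncard := Set.ncard_le_ncard (Set.subset_univ P) (Set.toFinite _)
    _ = Fintype.card V := by rw [Set.ncard_univ, Nat.card_eq_fintype_card]
  have hSLbdd : BddAbove SL := by
    refine ⟨Fintype.card (V ⊕ V), ?_⟩
    rintro n ⟨B, -, rfl⟩
    calc B.ncard ≤ (Set.univ : Set (V ⊕ V)).ncard :=
          Set.ncard_le_ncard (Set.subset_univ B) (Set.toFinite _)
    _ = _ := by rw [Set.ncard_univ, Nat.card_eq_fintype_card]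
  -- an open packing achieving the open packing number
  obtain ⟨P, hP, hPcard⟩ : ∃ P : Set V, IsOpenPacking F P ∧ P.ncard = openPackingNumber F := by
    have h0 : (0:ℕ) ∈ SP := ⟨∅, by intro u hu; exact absurd hu (Set.notMem_empty u), by simp⟩
    exact Nat.sSup_mem ⟨0, h0⟩ hSPbdd
  -- open packings meet each open neighborhood in at most one vertex
  have hP1 : ∀ (Q : Set V), IsOpenPacking F Q → ∀ v, (Q ∩ F.neighborSet v).ncard ≤ 1 := by
    intro Q hQ v
    rw [Set.ncard_le_one (Set.toFinite _)]
    rintro a ⟨haQ, hav⟩ b ⟨hbQ, hbv⟩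
    by_contra hab
    have := hQ a haQ b hbQ hab
    have : v ∈ F.neighborSet a ∩ F.neighborSet b :=
      ⟨(F.mem_neighborSet _ _).2 ((F.mem_neighborSet _ _).1 hav).symm,
       (F.mem_neighborSet _ _).2 ((F.mem_neighborSet _ _).1 hbv).symm⟩
    rw [hQ a haQ b hbQ hab] at this
    exact this
  -- any open packing has size ≤ openPackingNumber
  have hPle : ∀ (Q : Set V), IsOpenPacking F Q → Q.ncard ≤ openPackingNumber F := fun Q hQ =>
    le_csSup hSPbdd ⟨Q, hQ, rfl⟩
  apply le_antisymm
  · -- upper bound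
    have h0 : (0:ℕ) ∈ SL := ⟨∅, fun v => by simp, by simp⟩
    apply csSup_le ⟨0, h0⟩
    rintro n ⟨B, hB, rfl⟩
    set A : Set V := Sum.inl ⁻¹' B with hA
    set C : Set V := Sum.inr ⁻¹' B with hC
    have hBdecomp : B = Sum.inl '' A ∪ Sum.inr '' C := by
      ext (x | x) <;> simp [hA, hC]
    have hBcard : B.ncard = A.ncard + C.ncard := by
      rw [hBdecomp, Set.ncard_union_eq (by simp [Set.disjoint_left]) (Set.toFinite _)
        (Set.toFinite _), Set.ncard_image_of_injective _ Sum.inl_injective,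
        Set.ncard_image_of_injective _ Sum.inr_injective]
    -- the neighborhood constraint at inl v
    have hkey : ∀ v : V, (A ∩ F.neighborSet v).ncard + (B ∩ {Sum.inr v}).ncard ≤ 2 := by
      intro v
      have h := hB (Sum.inl v)
      rw [corona_nbhd_inl, Set.inter_union_distrib_left] at h
      have himg : B ∩ Sum.inl '' F.neighborSet v = Sum.inl '' (A ∩ F.neighborSet v) := by
        ext (x | x) <;> simp [hA]
      rw [himg, Set.ncard_union_eq (by simp [Set.disjoint_left]) (Set.toFinite _)
        (Set.toFinite _), Set.ncard_image_of_injective _ Sum.inl_injective] at h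
      exact h
    have h1 : ∀ v : V, (A ∩ F.neighborSet v).ncard ≤ 2 := fun v =>
      le_trans (Nat.le_add_right _ _) (hkey v)
    have h2 : ∀ v ∈ C, (A ∩ F.neighborSet v).ncard ≤ 1 := by
      intro v hv
      have h := hkey v
      have : B ∩ {Sum.inr v} = {Sum.inr v} := by
        rw [Set.inter_eq_right]; simpa [hC] using hv
      rw [this, Set.ncard_singleton] at h
      omega
    set D : Set V := {v | 2 ≤ (A ∩ F.neighborSet v).ncard} with hD
    have hDC : Disjoint D C := by
      rw [Set.disjoint_left]
      intro v hvD hvC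
      have := h2 v hvC
      have := hvD
      simp only [hD, Set.mem_setOf_eq] at this
      omega
    -- choice function
    have hfex : ∀ v ∈ D, ∃ u, u ∈ A ∩ F.neighborSet v := by
      intro v hv
      have : (A ∩ F.neighborSet v).ncard ≠ 0 := by
        have := hv; simp only [hD, Set.mem_setOf_eq] at this; omega
      exact Set.nonempty_of_ncard_ne_zero this
    choose f hf using hfex
    set R : Set V := {u | ∃ v, ∃ h : v ∈ D, f v h = u} with hR
    have hRcard : R.ncard ≤ D.ncard := by
      have : R ⊆ (fun v => if h : v ∈ D then f v h else v) '' D := by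
        rintro u ⟨v, hv, rfl⟩
        exact ⟨v, hv, by simp [hv]⟩
      exact le_trans (Set.ncard_le_ncard this (Set.toFinite _))
        (Set.ncard_image_le (Set.toFinite _))
    set A' : Set V := A \ R with hA'
    have hA'pack : IsOpenPacking F A' := by
      intro u hu w hw huw
      by_contra hne
      obtain ⟨x, hxu, hxw⟩ := Set.nonempty_iff_ne_empty.2 hne
      have hux : u ∈ A ∩ F.neighborSet x :=
        ⟨hu.1, (F.mem_neighborSet _ _).2 ((F.mem_neighborSet _ _).1 hxu).symm⟩
      have hwx : w ∈ A ∩ F.neighborSet x :=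
        ⟨hw.1, (F.mem_neighborSet _ _).2 ((F.mem_neighborSet _ _).1 hxw).symm⟩
      have hsub : ({u, w} : Set V) ⊆ A ∩ F.neighborSet x := by
        rintro y (rfl | rfl); exacts [hux, hwx]
      have hxD : x ∈ D := by
        simp only [hD, Set.mem_setOf_eq]
        calc 2 = ({u, w} : Set V).ncard := (Set.ncard_pair huw).symm
        _ ≤ _ := Set.ncard_le_ncard hsub (Set.toFinite _)
      have heq : ({u, w} : Set V) = A ∩ F.neighborSet x := by
        apply Set.eq_of_subset_of_ncard_le hsub _ (Set.toFinite _)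
        rw [Set.ncard_pair huw]; exact h1 x
      have hfx : f x hxD ∈ ({u, w} : Set V) := heq ▸ hf x hxD
      have hfR : f x hxD ∈ R := ⟨x, hxD, rfl⟩
      rcases hfx with h | h
      · exact hu.2 (h ▸ hfR)
      · exact hw.2 (h ▸ hfR)
    have hAle : A.ncard ≤ openPackingNumber F + D.ncard := by
      have hsub : A ⊆ A' ∪ R := by
        intro a ha
        by_cases h : a ∈ R
        · exact Or.inr h
        · exact Or.inl ⟨ha, h⟩
      calc A.ncard ≤ (A' ∪ R).ncard := Set.ncard_le_ncard hsub (Set.toFinite _)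
      _ ≤ A'.ncard + R.ncard := Set.ncard_union_le _ _
      _ ≤ openPackingNumber F + D.ncard := Nat.add_le_add (hPle A' hA'pack) hRcard
    have hCD : C.ncard + D.ncard ≤ Fintype.card V := by
      have := Set.ncard_union_eq hDC.symm (Set.toFinite _) (Set.toFinite _)
      calc C.ncard + D.ncard = (C ∪ D).ncard := this.symm
      _ ≤ (Set.univ : Set V).ncard := Set.ncard_le_ncard (Set.subset_univ _) (Set.toFinite _)
      _ = Fintype.card V := by rw [Set.ncard_univ, Nat.card_eq_fintype_card]
    omega
  · -- lower bound
    set B : Set (V ⊕ V) := Sum.inl '' P ∪ Sum.inr '' Set.univ with hBdef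
    have hBcard : B.ncard = openPackingNumber F + Fintype.card V := by
      rw [hBdef, Set.ncard_union_eq (by simp [Set.disjoint_left]) (Set.toFinite _)
        (Set.toFinite _), Set.ncard_image_of_injective _ Sum.inl_injective,
        Set.ncard_image_of_injective _ Sum.inr_injective, hPcard, Set.ncard_univ,
        Nat.card_eq_fintype_card]
    have hBtlp : IsTotalLimitedPacking (corona F) 2 B := by
      rintro (v | v)
      · rw [corona_nbhd_inl, Set.inter_union_distrib_left]
        have himg : B ∩ Sum.inl '' F.neighborSet v = Sum.inl '' (P ∩ F.neighborSet v) := by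
          ext (x | x) <;> simp [hBdef]
        have hsing : B ∩ {Sum.inr v} = {Sum.inr v} := by
          rw [Set.inter_eq_right]; simp [hBdef]
        rw [himg, hsing, Set.ncard_union_eq (by simp [Set.disjoint_left]) (Set.toFinite _)
          (Set.toFinite _), Set.ncard_image_of_injective _ Sum.inl_injective,
          Set.ncard_singleton]
        have := hP1 P hP v
        omega
      · rw [corona_nbhd_inr]
        calc (B ∩ {Sum.inl v}).ncard ≤ ({Sum.inl v} : Set (V ⊕ V)).ncard :=
              Set.ncard_le_ncard Set.inter_subset_right (Set.toFinite _)
        _ = 1 := Set.ncard_singleton _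
        _ ≤ 2 := one_le_two
    exact le_csSup hSLbdd ⟨B, hBtlp, hBcard⟩
end
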